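/- Let n ≥ 5 be odd, let V = {0,1,…,n−1} with the natural order, let Q be a quasi-pairing of V (so ∪Q = V), and set T := Inv(underline(n), Q). Then T is indecomposable if and only if all of the following hold: (1) Q is irreducible; (2) v_Q^+ ≥ v_Q^- + 2; (3) for every v, if both {v, v+2} ∈ Q and {v+1, v+3} ∈ Q, then v̂_Q ∈ {v, v+3}; (4) for every v, if {v, v+1} ∈ Q, then v̂_Q ∈ {v, v+1} ∖ {0, n−1}. -/

import Mathlib

open Set

/-- The arc relation of the tournament `Inv(underline(V), P)` obtained from the
transitive tournament on a linearly ordered type by reversing the arcs `(x,y)`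
with `{x,y} ∈ P`. -/
def InvArc {α : Type*} [LinearOrder α] (P : Set (Set α)) (x y : α) : Prop :=
  (x < y ∧ ({x, y} : Set α) ∉ P) ∨ (y < x ∧ ({x, y} : Set α) ∈ P)

/-- `M` is a module of the subtournament of `Inv(·, P)` induced on the vertex set `W`. -/
def IsModuleOn {α : Type*} [LinearOrder α] (P : Set (Set α)) (W M : Set α) : Prop :=
  M ⊆ W ∧ ∀ v ∈ W, v ∉ M →
    (∀ x ∈ M, InvArc P v x) ∨ (∀ x ∈ M, InvArc P x v)

/-- A subset of the vertex set `W` is trivial if it is empty, a singleton, or all of `W`. -/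
def IsTrivialSubset {α : Type*} (W M : Set α) : Prop :=
  M = ∅ ∨ (∃ a, M = {a}) ∨ M = W

/-- A nontrivial module of the tournament `Inv(·, P)` induced on `W`. -/
def IsNontrivialModuleOn {α : Type*} [LinearOrder α] (P : Set (Set α)) (W M : Set α) : Prop :=
  IsModuleOn P W M ∧ ¬ IsTrivialSubset W M

/-- The tournament `Inv(·, P)` induced on `W` is indecomposable: all its modules are trivial. -/
def IndecomposableOn {α : Type*} [LinearOrder α] (P : Set (Set α)) (W : Set α) : Prop :=
  ∀ M : Set α, IsModuleOn P W M → IsTrivialSubset W M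

/-- The tournament `Inv(·, P)` induced on `W` is decomposable: it has a nontrivial module. -/
def DecomposableOn {α : Type*} [LinearOrder α] (P : Set (Set α)) (W : Set α) : Prop :=
  ∃ M : Set α, IsNontrivialModuleOn P W M

/-- A co-module of the tournament `Inv(·, P)` on `W`: a subset `M` of `W` such that
`M` or `W ∖ M` is a nontrivial module. -/
def IsCoModuleOn {α : Type*} [LinearOrder α] (P : Set (Set α)) (W M : Set α) : Prop :=
  M ⊆ W ∧ (IsNontrivialModuleOn P W M ∨ IsNontrivialModuleOn P W (W \ M))

/-- `mc(underline(W))`: the family of minimal co-modules of the transitive tournament on `W`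
(a minimal co-module contains no other co-module). -/
def mcOn {α : Type*} [LinearOrder α] (W : Set α) : Set (Set α) :=
  {M | IsCoModuleOn (∅ : Set (Set α)) W M ∧
    ∀ C : Set α, IsCoModuleOn (∅ : Set (Set α)) W C → C ⊆ M → C = M}

/-- `S` is a transversal of the family `F`: it meets every member of `F`. -/
def TransversalOf {α : Type*} (S : Set α) (F : Set (Set α)) : Prop :=
  ∀ C ∈ F, (S ∩ C).Nonempty

/-- A partial pairing of `V`: a set of pairwise disjoint 2-element subsets of `V`. -/
def IsPartialPairingOn {α : Type*} (V : Set α) (P : Set (Set α)) : Prop :=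
  (∀ B ∈ P, B ⊆ V ∧ B.ncard = 2) ∧
  ∀ B ∈ P, ∀ C ∈ P, B ≠ C → Disjoint B C

/-- `I` is an interval of the totally ordered set `X`: every element of `X ∖ I` is greater
than all elements of `I` or smaller than all of them. -/
def IsIntervalOf {α : Type*} [LinearOrder α] (X I : Set α) : Prop :=
  I ⊆ X ∧ ∀ v ∈ X \ I, (∀ i ∈ I, v < i) ∨ (∀ i ∈ I, i < v)

/-- A nontrivial interval of `X`. -/
def IsNontrivialIntervalOf {α : Type*} [LinearOrder α] (X I : Set α) : Prop :=
  IsIntervalOf X I ∧ ¬ IsTrivialSubset X I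

/-- A family of blocks `P` on the totally ordered set `X` is irreducible if no nontrivial
interval of `X` is a union of blocks of `P`. -/
def IrreducibleOn {α : Type*} [LinearOrder α] (X : Set α) (P : Set (Set α)) : Prop :=
  ∀ R ⊆ P, ¬ IsNontrivialIntervalOf X (⋃₀ R)

/-- A partial quasi-pairing of `V`: a set `Q` of `m+1` two-element subsets of `V` (`m ≥ 1`)
whose union has size `2m+1`. -/
def IsPartialQuasiPairingOn {α : Type*} (V : Set α) (Q : Set (Set α)) : Prop :=
  (∀ B ∈ Q, B ⊆ V ∧ B.ncard = 2) ∧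
  ∃ m : ℕ, 1 ≤ m ∧ (⋃₀ Q).ncard = 2 * m + 1 ∧ Q.ncard = m + 1

/-- The distinguished data of a quasi-pairing `Q`: `vh = v̂_Q` is the element lying in the two
blocks `{vh, vm}` and `{vh, vp}` of `Q`, with `vm = v_Q^- < v_Q^+ = vp`. -/
def QPData {α : Type*} [LinearOrder α] (Q : Set (Set α)) (vh vm vp : α) : Prop :=
  ({vh, vm} : Set α) ∈ Q ∧ ({vh, vp} : Set α) ∈ Q ∧ vm < vp

/-- `Q_part`: the partition of `⋃₀ Q` obtained from `Q` by merging its two intersecting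
blocks into `B_Q = {v̂_Q, v_Q^-, v_Q^+}`. -/
def QPart {α : Type*} [LinearOrder α] (Q : Set (Set α)) (vh vm vp : α) : Set (Set α) :=
  (Q \ {({vh, vm} : Set α), ({vh, vp} : Set α)}) ∪ {({vh, vm, vp} : Set α)}

namespace Stmt5

/-- the pairing relation -/
def Rel (Q : Set (Set ℕ)) (x y : ℕ) : Prop := ({x, y} : Set ℕ) ∈ Q

structure Setup (n : ℕ) (Q : Set (Set ℕ)) (vh vm vp : ℕ) : Prop where
  hn : 5 ≤ n
  mem_lt : ∀ {x y : ℕ}, Rel Q x y → x < n ∧ y < n ∧ x ≠ y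
  symm : ∀ {x y : ℕ}, Rel Q x y → Rel Q y x
  cover : ∀ x, x < n → ∃ y, Rel Q x y
  uniq : ∀ {x y z : ℕ}, Rel Q x y → Rel Q x z → y ≠ z →
    x = vh ∧ ((y = vm ∧ z = vp) ∨ (y = vp ∧ z = vm))
  rhm : Rel Q vh vm
  rhp : Rel Q vh vp
  hmp : vm < vp

theorem setup_of (n : ℕ) (hn : 5 ≤ n) (Q : Set (Set ℕ))
    (hQ : IsPartialQuasiPairingOn (Set.Iio n) Q) (hcover : ⋃₀ Q = Set.Iio n)
    (vh vm vp : ℕ) (hdata : QPData Q vh vm vp) : Setup n Q vh vm vp := by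
  obtain ⟨hblocks, m, hm1, hU, hQc⟩ := hQ
  obtain ⟨h1, h2, hmp⟩ := hdata
  -- basic facts about blocks
  have bsub : ∀ B ∈ Q, B ⊆ Set.Iio n := fun B hB => (hblocks B hB).1
  have bcard : ∀ B ∈ Q, B.ncard = 2 := fun B hB => (hblocks B hB).2
  have mem_lt : ∀ {x y : ℕ}, Rel Q x y → x < n ∧ y < n ∧ x ≠ y := by
    intro x y h
    have hx : x ∈ Set.Iio n := bsub _ h (by left; rfl)
    have hy : y ∈ Set.Iio n := bsub _ h (by right; rfl)
    refine ⟨hx, hy, ?_⟩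
    rintro rfl
    have := bcard _ h
    simp [Set.ncard_singleton] at this
  have symm : ∀ {x y : ℕ}, Rel Q x y → Rel Q y x := by
    intro x y h; unfold Rel at *; rwa [Set.pair_comm]
  -- Q is finite
  have hQfin : Q.Finite := ((Set.finite_Iio n).finite_subsets).subset (fun B hB => bsub B hB)
  have hBfin : ∀ B ∈ Q, B.Finite := fun B hB => (Set.finite_Iio n).subset (bsub B hB)
  -- degree counting
  classical
  set 𝔔 : Finset (Set ℕ) := hQfin.toFinset with h𝔔
  have hQcard : 𝔔.card = m + 1 := by
    rw [← hQc]; exact (Set.ncard_eq_toFinset_card Q hQfin).symm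
  have hsum : ∑ x ∈ Finset.range n, (𝔔.filter (fun B => x ∈ B)).card = 2 * (m + 1) := by
    have : ∀ B ∈ 𝔔, ((Finset.range n).filter (fun x => x ∈ B)).card = 2 := by
      intro B hB
      have hBQ : B ∈ Q := hQfin.mem_toFinset.mp hB
      have : (Finset.range n).filter (fun x => x ∈ B) = (hBfin B hBQ).toFinset := by
        ext x
        simp only [Finset.mem_filter, Finset.mem_range, Set.Finite.mem_toFinset]
        exact ⟨fun h => h.2, fun h => ⟨bsub B hBQ h, h⟩⟩
      rw [this, ← Set.ncard_eq_toFinset_card B (hBfin B hBQ)]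
      exact bcard B hBQ
    calc ∑ x ∈ Finset.range n, (𝔔.filter (fun B => x ∈ B)).card
        = ∑ x ∈ Finset.range n, ∑ B ∈ 𝔔, (if x ∈ B then 1 else 0) := by
          refine Finset.sum_congr rfl fun x _ => ?_
          rw [Finset.card_filter]
      _ = ∑ B ∈ 𝔔, ∑ x ∈ Finset.range n, (if x ∈ B then 1 else 0) := Finset.sum_comm
      _ = ∑ B ∈ 𝔔, ((Finset.range n).filter (fun x => x ∈ B)).card := by
          refine Finset.sum_congr rfl fun B _ => ?_
          rw [Finset.card_filter]
      _ = ∑ B ∈ 𝔔, 2 := Finset.sum_congr rfl this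
      _ = 2 * (m + 1) := by rw [Finset.sum_const, hQcard]; ring
  have hn2m : n = 2 * m + 1 := by
    rw [hcover] at hU
    rw [Set.ncard_eq_toFinset_card', Set.toFinset_Iio] at hU; rw [Nat.card_Iio] at hU
    omega
  have deg1 : ∀ x, x < n → 1 ≤ (𝔔.filter (fun B => x ∈ B)).card := by
    intro x hx
    have : x ∈ ⋃₀ Q := by rw [hcover]; exact hx
    obtain ⟨B, hBQ, hxB⟩ := this
    have : B ∈ 𝔔.filter (fun B => x ∈ B) := by
      simp only [Finset.mem_filter, h𝔔, hQfin.mem_toFinset]; exact ⟨hBQ, hxB⟩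
    exact Finset.card_pos.mpr ⟨B, this⟩
  -- key: at most one "excess"
  have key : ∀ x y : ℕ, x < n → y < n → x ≠ y →
      2 ≤ (𝔔.filter (fun B => x ∈ B)).card → 2 ≤ (𝔔.filter (fun B => y ∈ B)).card → False := by
    intro x y hx hy hxy h2x h2y
    have hxm : x ∈ Finset.range n := Finset.mem_range.mpr hx
    have hym : y ∈ (Finset.range n).erase x := Finset.mem_erase.mpr ⟨hxy.symm, Finset.mem_range.mpr hy⟩
    have e1 : ∑ z ∈ Finset.range n, (𝔔.filter (fun B => z ∈ B)).card
        = (𝔔.filter (fun B => x ∈ B)).card + ∑ z ∈ (Finset.range n).erase x, (𝔔.filter (fun B => z ∈ B)).card :=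
      (Finset.add_sum_erase _ _ hxm).symm
    have e2 : ∑ z ∈ (Finset.range n).erase x, (𝔔.filter (fun B => z ∈ B)).card
        = (𝔔.filter (fun B => y ∈ B)).card + ∑ z ∈ ((Finset.range n).erase x).erase y, (𝔔.filter (fun B => z ∈ B)).card :=
      (Finset.add_sum_erase _ _ hym).symm
    have e3 : (((Finset.range n).erase x).erase y).card = n - 2 := by
      rw [Finset.card_erase_of_mem hym, Finset.card_erase_of_mem hxm, Finset.card_range]; omega
    have hge : n - 2 ≤ ∑ z ∈ ((Finset.range n).erase x).erase y, (𝔔.filter (fun B => z ∈ B)).card := by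
      rw [← e3]
      rw [Finset.card_eq_sum_ones]
      refine Finset.sum_le_sum ?_
      intro z hz
      have hzn : z < n := by
        have := Finset.mem_of_mem_erase (Finset.mem_of_mem_erase hz)
        exact Finset.mem_range.mp this
      exact deg1 z hzn
    have hs := hsum
    rw [e1, e2] at hs
    omega
  have deg2 : ∀ x : ℕ, ∀ B1 ∈ Q, ∀ B2 ∈ Q, B1 ≠ B2 → x ∈ B1 → x ∈ B2 →
      2 ≤ (𝔔.filter (fun B => x ∈ B)).card := by
    intro x B1 hB1 B2 hB2 hne hx1 hx2
    refine Finset.one_lt_card.mpr ⟨B1, ?_, B2, ?_, hne⟩ <;>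
      simp only [Finset.mem_filter, h𝔔, hQfin.mem_toFinset] <;> exact ⟨by assumption, by assumption⟩
  have key3 : ∀ x : ℕ, x < n → ∀ B1 ∈ Q, ∀ B2 ∈ Q, ∀ B3 ∈ Q,
      B1 ≠ B2 → B1 ≠ B3 → B2 ≠ B3 → x ∈ B1 → x ∈ B2 → x ∈ B3 → False := by
    intro x hx B1 hB1 B2 hB2 B3 hB3 h12 h13 h23 hx1 hx2 hx3
    have h3 : 3 ≤ (𝔔.filter (fun B => x ∈ B)).card := by
      have hsub : ({B1, B2, B3} : Finset (Set ℕ)) ⊆ 𝔔.filter (fun B => x ∈ B) := by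
        intro B hB
        simp only [Finset.mem_insert, Finset.mem_singleton] at hB
        simp only [Finset.mem_filter, h𝔔, hQfin.mem_toFinset]
        rcases hB with rfl | rfl | rfl <;> exact ⟨by assumption, by assumption⟩
      have hc : ({B1, B2, B3} : Finset (Set ℕ)).card = 3 := by
        rw [Finset.card_insert_of_notMem (by simp [h12, h13]),
          Finset.card_insert_of_notMem (by simp [h23]), Finset.card_singleton]
      calc 3 = ({B1, B2, B3} : Finset (Set ℕ)).card := hc.symm
        _ ≤ _ := Finset.card_le_card hsub
    have hxm : x ∈ Finset.range n := Finset.mem_range.mpr hx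
    have e1 : ∑ z ∈ Finset.range n, (𝔔.filter (fun B => z ∈ B)).card
        = (𝔔.filter (fun B => x ∈ B)).card + ∑ z ∈ (Finset.range n).erase x, (𝔔.filter (fun B => z ∈ B)).card :=
      (Finset.add_sum_erase _ _ hxm).symm
    have e3 : ((Finset.range n).erase x).card = n - 1 := by
      rw [Finset.card_erase_of_mem hxm, Finset.card_range]
    have hge : n - 1 ≤ ∑ z ∈ (Finset.range n).erase x, (𝔔.filter (fun B => z ∈ B)).card := by
      rw [← e3, Finset.card_eq_sum_ones]
      refine Finset.sum_le_sum fun z hz => deg1 z (Finset.mem_range.mp (Finset.mem_of_mem_erase hz))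
    have hs := hsum
    rw [e1] at hs
    omega
  have hC12 : ({vh, vm} : Set ℕ) ≠ ({vh, vp} : Set ℕ) := by
    intro h
    have hvm : vm ∈ ({vh, vp} : Set ℕ) := h ▸ (by right; rfl)
    have hne : vh ≠ vm := (mem_lt h1).2.2
    rcases hvm with h' | h'
    · exact hne h'.symm
    · exact absurd h' (Nat.ne_of_lt hmp)
  have uniq : ∀ {x y z : ℕ}, Rel Q x y → Rel Q x z → y ≠ z →
      x = vh ∧ ((y = vm ∧ z = vp) ∨ (y = vp ∧ z = vm)) := by
    intro x y z hxy hxz hyz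
    have hxny : x ≠ y := (mem_lt hxy).2.2
    have hxnz : x ≠ z := (mem_lt hxz).2.2
    have hB12 : ({x, y} : Set ℕ) ≠ ({x, z} : Set ℕ) := by
      intro h
      have : y ∈ ({x, z} : Set ℕ) := h ▸ (by right; rfl)
      rcases this with h' | h'
      · exact hxny h'.symm
      · exact hyz h'
    have hxvh : x = vh := by
      by_contra hne
      exact key x vh (mem_lt hxy).1 (mem_lt h1).1 hne
        (deg2 x _ hxy _ hxz hB12 (by left; rfl) (by left; rfl))
        (deg2 vh _ h1 _ h2 hC12 (by left; rfl) (by left; rfl))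
    rw [hxvh] at hxy hxz
    have hmem : ∀ {w : ℕ}, Rel Q vh w → w = vm ∨ w = vp := by
      intro w hw
      by_contra hcon
      push_neg at hcon
      have hwm : ({vh, w} : Set ℕ) ≠ ({vh, vm} : Set ℕ) := by
        intro h
        have : w ∈ ({vh, vm} : Set ℕ) := h ▸ (by right; rfl)
        rcases this with h' | h'
        · exact (mem_lt hw).2.2 h'.symm
        · exact hcon.1 h'
      have hwp : ({vh, w} : Set ℕ) ≠ ({vh, vp} : Set ℕ) := by
        intro h
        have : w ∈ ({vh, vp} : Set ℕ) := h ▸ (by right; rfl)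
        rcases this with h' | h'
        · exact (mem_lt hw).2.2 h'.symm
        · exact hcon.2 h'
      exact key3 vh (mem_lt hw).1 _ hw _ h1 _ h2 hwm hwp hC12
        (by left; rfl) (by left; rfl) (by left; rfl)
    rcases hmem hxy with rfl | rfl
    · rcases hmem hxz with rfl | rfl
      · exact absurd rfl hyz
      · exact ⟨hxvh, Or.inl ⟨rfl, rfl⟩⟩
    · rcases hmem hxz with rfl | rfl
      · exact ⟨hxvh, Or.inr ⟨rfl, rfl⟩⟩
      · exact absurd rfl hyz
  have cover : ∀ x, x < n → ∃ y, Rel Q x y := by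
    intro x hx
    have : x ∈ ⋃₀ Q := by rw [hcover]; exact hx
    obtain ⟨B, hBQ, hxB⟩ := this
    obtain ⟨u, v, huv, rfl⟩ := Set.ncard_eq_two.mp (bcard B hBQ)
    rcases hxB with rfl | rfl
    · exact ⟨v, hBQ⟩
    · exact ⟨u, by rw [Rel, Set.pair_comm]; exact hBQ⟩
  exact ⟨hn, @mem_lt, @symm, cover, @uniq, h1, h2, hmp⟩





variable {n : ℕ} {Q : Set (Set ℕ)} {vh vm vp : ℕ}

lemma Setup.vh_lt (S : Setup n Q vh vm vp) : vh < n := (S.mem_lt S.rhm).1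
lemma Setup.vm_lt (S : Setup n Q vh vm vp) : vm < n := (S.mem_lt S.rhm).2.1
lemma Setup.vp_lt (S : Setup n Q vh vm vp) : vp < n := (S.mem_lt S.rhp).2.1
lemma Setup.vh_ne_vm (S : Setup n Q vh vm vp) : vh ≠ vm := (S.mem_lt S.rhm).2.2
lemma Setup.vh_ne_vp (S : Setup n Q vh vm vp) : vh ≠ vp := (S.mem_lt S.rhp).2.2

lemma Setup.mem_qpart_pair (S : Setup n Q vh vm vp) {x y : ℕ} (h : Rel Q x y)
    (hx : x ≠ vh) (hy : y ≠ vh) : ({x, y} : Set ℕ) ∈ QPart Q vh vm vp := by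
  left
  refine ⟨h, ?_⟩
  intro hmem
  rcases hmem with h' | h'
  · have : vh ∈ ({x, y} : Set ℕ) := by rw [h']; left; rfl
    rcases this with h'' | h'' <;> [exact hx h''.symm; exact hy h''.symm]
  · simp only [Set.mem_singleton_iff] at h'
    have : vh ∈ ({x, y} : Set ℕ) := by rw [h']; left; rfl
    rcases this with h'' | h'' <;> [exact hx h''.symm; exact hy h''.symm]

lemma Setup.mem_qpart_BQ (S : Setup n Q vh vm vp) :
    ({vh, vm, vp} : Set ℕ) ∈ QPart Q vh vm vp := by
  right; rfl

/-- If `x` has partners `y ≠ z` then `x = vh` and `{y,z} = {vm,vp}`. -/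
lemma Setup.uniq' (S : Setup n Q vh vm vp) {x y z : ℕ} (h1 : Rel Q x y) (h2 : Rel Q x z)
    (hne : y ≠ z) : x = vh := (S.uniq h1 h2 hne).1

/-- a partner of `vh` is `vm` or `vp`. -/
lemma Setup.partner_vh (S : Setup n Q vh vm vp) {y : ℕ} (h : Rel Q vh y) : y = vm ∨ y = vp := by
  by_cases hy : y = vm
  · exact Or.inl hy
  · rcases (S.uniq h S.rhm hy).2 with ⟨h1, _⟩ | ⟨h1, _⟩
    · exact absurd h1 hy
    · exact Or.inr h1

/-- a non-`vh` vertex has a unique partner. -/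
lemma Setup.partner_unique (S : Setup n Q vh vm vp) {x y z : ℕ} (hx : x ≠ vh)
    (h1 : Rel Q x y) (h2 : Rel Q x z) : y = z := by
  by_contra hne
  exact hx (S.uniq' h1 h2 hne)

structure MCtx (n : ℕ) (Q : Set (Set ℕ)) (vh vm vp : ℕ) (M : Set ℕ) (a b : ℕ) : Prop where
  S : Setup n Q vh vm vp
  C2 : vm + 2 ≤ vp
  ha : a ∈ M
  hb : b ∈ M
  hmin : ∀ x ∈ M, a ≤ x
  hmax : ∀ x ∈ M, x ≤ b
  hsub : M ⊆ Set.Iio n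
  uni : ∀ v, v < n → v ∉ M →
    ((∀ x ∈ M, x < v → Rel Q v x) ∧ (∀ x ∈ M, v < x → ¬Rel Q v x)) ∨
    ((∀ x ∈ M, x < v → ¬Rel Q v x) ∧ (∀ x ∈ M, v < x → Rel Q v x))
  hab : a < b

variable {M : Set ℕ} {a b : ℕ}

lemma MCtx.hbn (K : MCtx n Q vh vm vp M a b) : b < n := K.hsub K.hb
lemma MCtx.han (K : MCtx n Q vh vm vp M a b) : a < n := K.hsub K.ha

/-- Lemma 0 : M ≠ {vm, vp}. -/
lemma MCtx.lemma0 (K : MCtx n Q vh vm vp M a b) : M ≠ {vm, vp} := by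
  intro hMeq
  have S := K.S
  have hvmM : vm ∈ M := by rw [hMeq]; left; rfl
  have hvpM : vp ∈ M := by rw [hMeq]; right; rfl
  have C2 := K.C2
  have hw : vm + 1 ∉ M := by
    rw [hMeq]; intro h
    rcases h with h | h
    · omega
    · simp only [Set.mem_singleton_iff] at h; omega
  have hwn : vm + 1 < n := by have := S.vp_lt; have := S.hmp; omega
  rcases K.uni (vm+1) hwn hw with ⟨h1, h2⟩ | ⟨h1, h2⟩
  · have hr : Rel Q (vm+1) vm := h1 vm hvmM (by omega)
    by_cases hvh : vm + 1 = vh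
    · exact h2 vp hvpM (by omega) (hvh ▸ S.rhp)
    · exact S.vh_ne_vm (S.uniq' (S.symm hr) (S.symm S.rhm) hvh).symm
  · have hr : Rel Q (vm+1) vp := h2 vp hvpM (by omega)
    by_cases hvh : vm + 1 = vh
    · exact h1 vm hvmM (by omega) (hvh ▸ S.rhm)
    · exact S.vh_ne_vp (S.uniq' (S.symm hr) (S.symm S.rhp) hvh).symm

/-- vertices outside [a,b] have no partner in M. -/
lemma MCtx.outside (K : MCtx n Q vh vm vp M a b) :
    ∀ w, w < n → (w < a ∨ b < w) → ∀ x ∈ M, ¬ Rel Q w x := by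
  have S := K.S
  have hab := K.hab
  intro w hwn hwab x hxM hr
  have hwM : w ∉ M := by
    intro h
    rcases hwab with h' | h' <;> [exact absurd (K.hmin w h) (by omega); exact absurd (K.hmax w h) (by omega)]
  -- the "bad" case forces M = {vm, vp}
  have bad : (∀ x ∈ M, Rel Q w x) → False := by
    intro hall
    have hra : Rel Q w a := hall a K.ha
    have hrb : Rel Q w b := hall b K.hb
    have hwvh : w = vh := S.uniq' hra hrb (by omega)
    have hab' : (a = vm ∧ b = vp) := by
      rcases (S.uniq hra hrb (by omega)).2 with ⟨h1, h2⟩ | ⟨h1, h2⟩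
      · exact ⟨h1, h2⟩
      · exfalso; have := S.hmp; omega
    have hMvm : M = {vm, vp} := by
      apply Set.Subset.antisymm
      · intro y hyM
        by_cases hy : y = b
        · right; rw [hy, ← hab'.2]; rfl
        · have := (S.uniq (hall y hyM) hrb hy).2
          rcases this with ⟨h1, h2⟩ | ⟨h1, h2⟩
          · left; rw [h1]
          · exfalso; rw [h1, ← hab'.1] at *; omega
      · intro y hy
        rcases hy with h | h
        · rw [h, ← hab'.1]; exact K.ha
        · simp only [Set.mem_singleton_iff] at h; rw [h, ← hab'.2]; exact K.hb
    exact K.lemma0 hMvm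
  rcases K.uni w hwn hwM with ⟨h1, h2⟩ | ⟨h1, h2⟩
  · rcases hwab with hcase | hcase
    · -- w < a : all of M above w; h1 vacuous... the partners-above must be empty unless bad
      exact h2 x hxM (by have := K.hmin x hxM; omega) hr
    · -- b < w : all below; h1 says they're all partners: bad
      exact bad (fun y hy => h1 y hy (by have := K.hmax y hy; omega))
  · rcases hwab with hcase | hcase
    · exact bad (fun y hy => h2 y hy (by have := K.hmin y hy; omega))
    · exact h1 x hxM (by have := K.hmax x hxM; omega) hr

lemma MCtx.partner_in (K : MCtx n Q vh vm vp M a b) :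
    ∀ x ∈ M, ∀ y, Rel Q x y → y ∈ M ∨ (a < y ∧ y < b ∧ y ∉ M) := by
  intro x hxM y hr
  by_cases hyM : y ∈ M
  · exact Or.inl hyM
  · right
    have hyn : y < n := (K.S.mem_lt hr).2.1
    refine ⟨?_, ?_, hyM⟩
    · by_contra h
      push_neg at h
      have hya : y < a ∨ b < y := by
        rcases Nat.lt_or_ge y a with h' | h'
        · exact Or.inl h'
        · exfalso
          have hya : y = a := by omega
          exact hyM (hya ▸ K.ha)
      exact K.outside y hyn hya x hxM (K.S.symm hr)
    · by_contra h
      push_neg at h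
      have : b < y := by
        rcases Nat.lt_or_ge b y with h' | h'
        · exact h'
        · exfalso; exact absurd (Nat.le_antisymm h h') fun heq => hyM (heq ▸ K.hb)
      exact K.outside y hyn (Or.inr this) x hxM (K.S.symm hr)

/-- Gap classification lemma. -/
lemma MCtx.gcl (K : MCtx n Q vh vm vp M a b) {w : ℕ} (hwa : a < w) (hwb : w < b)
    (hwM : w ∉ M) :
    ((∀ x ∈ M, a < x → w < x) ∧ Rel Q w a) ∨
    (w = vh ∧ ∃ c ∈ M, a < c ∧ c < w ∧ a = vm ∧ c = vp ∧ (∀ x ∈ M, a < x → x = c ∨ w < x)) ∨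
    ((∀ x ∈ M, x < b → x < w) ∧ Rel Q w b) ∨
    (w = vh ∧ ∃ c ∈ M, w < c ∧ c < b ∧ c = vm ∧ b = vp ∧ (∀ x ∈ M, x < b → x = c ∨ x < w)) := by
  have S := K.S
  have hmp := S.hmp
  have hwn : w < n := by have := K.hbn; omega
  rcases K.uni w hwn hwM with ⟨h1, h2⟩ | ⟨h1, h2⟩
  · have hra : Rel Q w a := h1 a K.ha hwa
    by_cases hc : ∃ c ∈ M, a < c ∧ c < w
    · obtain ⟨c, hcM, hac, hcw⟩ := hc
      have hrc : Rel Q w c := h1 c hcM hcw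
      have huq := S.uniq hra hrc (by omega)
      have hav : a = vm ∧ c = vp := by
        rcases huq.2 with ⟨e1, e2⟩ | ⟨e1, e2⟩
        · exact ⟨e1, e2⟩
        · exfalso; omega
      refine Or.inr (Or.inl ⟨huq.1, c, hcM, hac, hcw, hav.1, hav.2, ?_⟩)
      intro x hxM hax
      by_contra hcon
      push_neg at hcon
      obtain ⟨hxc, hxw⟩ := hcon
      have hxw' : x < w := by
        rcases Nat.lt_or_ge x w with h' | h'
        · exact h'
        · exfalso; exact hwM (by have hxw2 : x = w := (by omega); exact hxw2 ▸ hxM)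
      have hrx : Rel Q w x := h1 x hxM hxw'
      rcases (S.uniq hrc hrx (Ne.symm hxc)).2 with ⟨e1, e2⟩ | ⟨e1, e2⟩
      · omega
      · omega
    · push_neg at hc
      refine Or.inl ⟨?_, hra⟩
      intro x hxM hax
      have := hc x hxM hax
      rcases Nat.lt_or_ge w x with h' | h'
      · exact h'
      · exfalso
        have : x = w := by omega
        exact hwM (this ▸ hxM)
  · have hrb : Rel Q w b := h2 b K.hb hwb
    by_cases hc : ∃ c ∈ M, w < c ∧ c < b
    · obtain ⟨c, hcM, hwc, hcb⟩ := hc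
      have hrc : Rel Q w c := h2 c hcM hwc
      have huq := S.uniq hrc hrb (by omega)
      have hav : c = vm ∧ b = vp := by
        rcases huq.2 with ⟨e1, e2⟩ | ⟨e1, e2⟩
        · exact ⟨e1, e2⟩
        · exfalso; omega
      refine Or.inr (Or.inr (Or.inr ⟨huq.1, c, hcM, hwc, hcb, hav.1, hav.2, ?_⟩))
      intro x hxM hxb
      by_contra hcon
      push_neg at hcon
      obtain ⟨hxc, hxw⟩ := hcon
      have hxw' : w < x := by
        rcases Nat.lt_or_ge w x with h' | h'
        · exact h'
        · exfalso; exact hwM (by have hxw2 : x = w := (by omega); exact hxw2 ▸ hxM)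
      have hrx : Rel Q w x := h2 x hxM hxw'
      rcases (S.uniq hrc hrx (Ne.symm hxc)).2 with ⟨e1, e2⟩ | ⟨e1, e2⟩
      · omega
      · omega
    · push_neg at hc
      refine Or.inr (Or.inr (Or.inl ⟨?_, hrb⟩))
      intro x hxM hxb
      have := hc x hxM
      rcases Nat.lt_or_ge x w with h' | h'
      · exact h'
      · exfalso
        rcases Nat.lt_or_ge w x with h'' | h''
        · exact absurd (hc x hxM h'') (by omega)
        · exact hwM (by have hxw2 : x = w := (by omega); exact hxw2 ▸ hxM)

lemma interval_contra (S : Setup n Q vh vm vp)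
    (C1 : IrreducibleOn (Set.Iio n) (QPart Q vh vm vp)) {lo hi : ℕ}
    (hhi : hi < n) (hlohi : lo < hi) (hne : ¬(lo = 0 ∧ hi = n - 1))
    (hcov : ∀ x, lo ≤ x → x ≤ hi → ∃ B ∈ QPart Q vh vm vp, x ∈ B ∧ B ⊆ Set.Icc lo hi) :
    False := by
  have hn := S.hn
  set R : Set (Set ℕ) := {B | B ∈ QPart Q vh vm vp ∧ B ⊆ Set.Icc lo hi} with hR
  have hRsub : R ⊆ QPart Q vh vm vp := fun B hB => hB.1
  have hU : ⋃₀ R = Set.Icc lo hi := by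
    apply Set.Subset.antisymm
    · rintro x ⟨B, hB, hxB⟩
      exact hB.2 hxB
    · rintro x ⟨h1, h2⟩
      obtain ⟨B, hB, hxB, hBsub⟩ := hcov x h1 h2
      exact ⟨B, ⟨hB, hBsub⟩, hxB⟩
  refine C1 R hRsub ?_
  rw [hU]
  constructor
  · constructor
    · intro x hx
      exact lt_of_le_of_lt hx.2 hhi
    · rintro v ⟨hv1, hv2⟩
      simp only [Set.mem_Icc, not_and, not_le] at hv2
      rcases Nat.lt_or_ge v lo with h' | h'
      · left; intro i hi'; exact lt_of_lt_of_le h' hi'.1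
      · right; intro i hi'; exact lt_of_le_of_lt hi'.2 (hv2 h')
  · intro htriv
    rcases htriv with h | ⟨c, h⟩ | h
    · have : lo ∈ Set.Icc lo hi := by simp; omega
      rw [h] at this; exact this
    · have h1 : lo ∈ Set.Icc lo hi := by simp; omega
      have h2 : hi ∈ Set.Icc lo hi := by simp; omega
      rw [h] at h1 h2
      simp only [Set.mem_singleton_iff] at h1 h2
      omega
    · have h1 : (0 : ℕ) ∈ Set.Iio n := by simp; omega
      have h2 : n - 1 ∈ Set.Iio n := by simp; omega
      rw [← h] at h1 h2
      simp only [Set.mem_Icc] at h1 h2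
      exact hne ⟨by omega, by omega⟩

lemma uni2_of_module (S : Setup n Q vh vm vp) {M : Set ℕ}
    (hM : IsModuleOn Q (Set.Iio n) M) :
    ∀ v, v < n → v ∉ M →
      ((∀ x ∈ M, x < v → Rel Q v x) ∧ (∀ x ∈ M, v < x → ¬Rel Q v x)) ∨
      ((∀ x ∈ M, x < v → ¬Rel Q v x) ∧ (∀ x ∈ M, v < x → Rel Q v x)) := by
  intro v hvn hvM
  rcases hM.2 v hvn hvM with h | h
  · left
    constructor
    · intro x hxM hxv
      rcases h x hxM with ⟨h1, _⟩ | ⟨_, h2⟩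
      · omega
      · exact h2
    · intro x hxM hvx
      rcases h x hxM with ⟨_, h2⟩ | ⟨h1, _⟩
      · exact h2
      · omega
  · right
    constructor
    · intro x hxM hxv
      rcases h x hxM with ⟨_, h2⟩ | ⟨h1, _⟩
      · intro hr
        exact h2 (S.symm hr)
      · omega
    · intro x hxM hvx
      rcases h x hxM with ⟨h1, _⟩ | ⟨_, h2⟩
      · omega
      · exact S.symm h2

lemma alpha_case (S : Setup n Q vh vm vp)
    (C1 : IrreducibleOn (Set.Iio n) (QPart Q vh vm vp))
    (C2 : vm + 2 ≤ vp)
    (C3 : ∀ v, v < n → Rel Q v (v+2) → Rel Q (v+1) (v+3) → vh = v ∨ vh = v + 3)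
    (C4 : ∀ v, v < n → Rel Q v (v+1) → (vh = v ∨ vh = v + 1) ∧ vh ≠ 0 ∧ vh ≠ n - 1)
    (K : MCtx n Q vh vm vp M a b) {v : ℕ}
    (hva : a < v) (hvb : v < b) (hvM : v ∉ M)
    (hfill : ∀ w, a ≤ w → w < v → w ∈ M) (hvn : v < n)
    (ha1 : ∀ x ∈ M, x < v → Rel Q v x) (ha2 : ∀ x ∈ M, v < x → ¬Rel Q v x) : False := by
  have hmp := S.hmp
  have hbn := K.hbn
  have hn := S.hn
  -- v = a + 1
  have hv1 : v = a + 1 := by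
    by_contra h
    have ha1M : a + 1 ∈ M := hfill (a+1) (by omega) (by omega)
    have hra : Rel Q v a := ha1 a K.ha hva
    have hra1 : Rel Q v (a+1) := ha1 (a+1) ha1M (by omega)
    rcases (S.uniq hra hra1 (by omega)).2 with ⟨e1, e2⟩ | ⟨e1, e2⟩ <;> omega
  subst hv1
  have hraa1 : Rel Q (a+1) a := ha1 a K.ha (by omega)
  obtain ⟨hvh01, hvh0, hvhn1⟩ := C4 a (by omega) (S.symm hraa1)
  have hra1' : Rel Q a (a+1) := S.symm hraa1
  rcases hvh01 with hvha | hvha1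
  · -- vh = a
    have hvha' : a = vh := hvha.symm
    have hrel_vh : ∀ {y : ℕ}, Rel Q a y → y = vm ∨ y = vp := by
      intro y h
      exact S.partner_vh (hvha ▸ h)
    have hvm1 : vm = a + 1 := by
      rcases hrel_vh hra1' with h | h
      · exact h.symm
      · -- a + 1 = vp : then vm < a, but vm is a partner of a ∈ M
        exfalso
        have hram : Rel Q a vm := by rw [hvha']; exact S.rhm
        rcases K.partner_in a K.ha vm hram with h' | ⟨h', _⟩
        · have := K.hmin vm h'
          have hvmvh : vh ≠ vm := S.vh_ne_vm
          omega
        · omega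
    -- classification of gaps other than a+1
    have ogap : ∀ y, a < y → y < b → y ∉ M → y ≠ a+1 →
        (y = vp ∧ (∀ x ∈ M, a < x → y < x)) ∨ ((∀ x ∈ M, x < b → x < y) ∧ Rel Q y b) := by
      intro y hy1 hy2 hy3 hy4
      rcases K.gcl hy1 hy2 hy3 with ⟨g1, g2⟩ | ⟨ge, _⟩ | ⟨g1, g2⟩ | ⟨ge, _⟩
      · left
        refine ⟨?_, g1⟩
        rcases hrel_vh (S.symm g2) with h | h
        · omega
        · exact h
      · omega
      · exact Or.inr ⟨g1, g2⟩
      · omega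
    by_cases hk2 : ∃ c ∈ M, a < c ∧ c < b
    · -- |M| ≥ 3
      obtain ⟨c, hcM, hc1, hc2⟩ := hk2
      have hca1 : c ≠ a + 1 := fun h => hvM (h ▸ hcM)
      by_cases hg2 : ∃ y, a < y ∧ y < b ∧ y ∉ M ∧ y ≠ a+1
      · obtain ⟨y, hy1, hy2, hy3, hy4⟩ := hg2
        rcases ogap y hy1 hy2 hy3 hy4 with ⟨hyvp, habove⟩ | ⟨h1, h2⟩
        · -- y = vp is a gap; derive vp ≤ a + 2 contradicting C2
          exfalso
          have hvpc : y < c := habove c hcM hc1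
          have h2M : a + 2 ∉ M := by
            intro h
            have := habove (a+2) h (by omega)
            -- y < a + 2, but y > a, y ≠ a+1 so y ≥ a + 2
            omega
          have hy5 : a + 2 < y → False := by
            intro hlt
            rcases ogap (a+2) (by omega) (by omega) h2M (by omega) with ⟨h', _⟩ | ⟨g1, g2⟩
            · omega
            · have := g1 c hcM hc2
              omega
          exact hy5 (by omega)
        · -- top gap with Rel y b; show y = b - 1 and use C4
          exfalso
          have hnoz : ∀ z, y < z → z < b → False := by
            intro z hz1 hz2
            have hzM : z ∉ M := fun h => absurd (h1 z h hz2) (by omega)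
            have hz4 : z ≠ a + 1 := by
              have := h1 c hcM hc2
              omega
            rcases ogap z (by omega) hz2 hzM hz4 with ⟨hzvp, zabove⟩ | ⟨g1, g2⟩
            · have := zabove c hcM hc1
              have := h1 c hcM hc2
              omega
            · exact absurd (S.uniq' (S.symm h2) (S.symm g2) (by omega)) (by omega)
          have hyb : y + 1 = b := by
            by_contra h
            exact hnoz (y+1) (by omega) (by omega)
          have hcy := h1 c hcM hc2
          rcases (C4 y (by omega) (by rw [hyb]; exact h2)).1 with h | h <;> omega
      · -- no other gaps : M = [a,b] \ {a+1}
        push_neg at hg2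
        have hfull : ∀ x, a ≤ x → x ≤ b → x ≠ a+1 → x ∈ M := by
          intro x h1 h2 h3
          by_contra hxM
          have hxa : a < x := by
            rcases Nat.eq_or_lt_of_le h1 with h | h
            · exact absurd (h ▸ K.ha) hxM
            · exact h
          have hxb : x < b := by
            rcases Nat.eq_or_lt_of_le h2 with h | h
            · exact absurd (by rw [h]; exact K.hb) hxM
            · exact h
          exact h3 (hg2 x hxa hxb hxM)
        have hvpM : vp ∈ M := by
          have hrap : Rel Q a vp := by rw [hvha']; exact S.rhp
          rcases K.partner_in a K.ha vp hrap with h | ⟨g1, g2, g3⟩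
          · exact h
          · exact absurd (hg2 vp g1 g2 g3) (by omega)
        refine interval_contra S C1 hbn K.hab ?_ ?_
        · rintro ⟨h, _⟩; omega
        · intro x h1 h2
          by_cases hxB : x = a ∨ x = a + 1 ∨ x = vp
          · refine ⟨{vh, vm, vp}, S.mem_qpart_BQ, ?_, ?_⟩
            · rcases hxB with h | h | h
              · rw [h, hvha]; left; rfl
              · rw [h, ← hvm1]; right; left; rfl
              · rw [h]; right; right; rfl
            · rintro z (hz | hz | hz)
              · rw [hz, hvha]; exact Set.mem_Icc.mpr ⟨le_refl a, by omega⟩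
              · rw [hz, hvm1]; exact Set.mem_Icc.mpr ⟨by omega, by omega⟩
              · simp only [Set.mem_singleton_iff] at hz
                rw [hz]
                exact Set.mem_Icc.mpr ⟨K.hmin vp hvpM, K.hmax vp hvpM⟩
          · push_neg at hxB
            obtain ⟨hxa, hxa1, hxvp⟩ := hxB
            have hxM : x ∈ M := hfull x h1 h2 hxa1
            obtain ⟨y, hry⟩ := S.cover x (by omega)
            have hyM : y ∈ M := by
              rcases K.partner_in x hxM y hry with h | ⟨g1, g2, g3⟩
              · exact h
              · exfalso
                have hy : y = a + 1 := hg2 y g1 g2 g3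
                have : x = a := S.partner_unique (by omega) (S.symm (hy ▸ hry)) hraa1
                exact hxa this
            have hyna : y ≠ a := by
              rintro rfl
              rcases hrel_vh (S.symm hry) with h | h
              · omega
              · exact hxvp h
            refine ⟨{x, y}, S.mem_qpart_pair hry (by omega) (by omega), by left; rfl, ?_⟩
            · have hy1 := K.hmin y hyM
              have hy2 := K.hmax y hyM
              rintro z (hz | hz)
              · rw [hz]; exact Set.mem_Icc.mpr ⟨h1, h2⟩
              · simp only [Set.mem_singleton_iff] at hz
                rw [hz]; exact Set.mem_Icc.mpr ⟨by omega, by omega⟩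
    · -- M = {a, b}
      push_neg at hk2
      have hM2 : ∀ x ∈ M, x = a ∨ x = b := by
        intro x hx
        have h1 := K.hmin x hx
        have h2 := K.hmax x hx
        rcases Nat.eq_or_lt_of_le h1 with h | h
        · exact Or.inl h.symm
        · rcases Nat.eq_or_lt_of_le h2 with h' | h'
          · exact Or.inr h'
          · exact absurd h' (by have := hk2 x hx h; omega)
      -- each gap is type1 (Rel w a) or type3 (Rel w b)
      have gap13 : ∀ w, a < w → w < b → Rel Q w a ∨ Rel Q w b := by
        intro w hw1 hw2
        have hwM : w ∉ M := by
          intro h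
          rcases hM2 w h with h' | h' <;> omega
        rcases K.gcl hw1 hw2 hwM with ⟨_, g2⟩ | ⟨_, c, hcM, g1, g2, _⟩ | ⟨_, g2⟩ | ⟨_, c, hcM, g1, g2, _⟩
        · exact Or.inl g2
        · exfalso; rcases hM2 c hcM with h | h <;> omega
        · exact Or.inr g2
        · exfalso; rcases hM2 c hcM with h | h <;> omega
      -- type1 gap other than a+1 pins down vm, vp
      have t1pin : ∀ w, a < w → w < b → w ≠ a + 1 → Rel Q w a → vm = a + 1 ∧ vp = w := by
        intro w hw1 hw2 hw3 hw4
        rcases (S.uniq hra1' (S.symm hw4) (by omega)).2 with ⟨e1, e2⟩ | ⟨e1, e2⟩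
        · exact ⟨e1.symm, e2.symm⟩ 
        · exfalso; omega
      have t3pin : ∀ w w', a < w → w < b → a < w' → w' < b → w ≠ w' →
          Rel Q w b → Rel Q w' b → b = vh ∧ ((w = vm ∧ w' = vp) ∨ (w = vp ∧ w' = vm)) :=
        fun w w' _ _ _ _ hne h h' => S.uniq (S.symm h) (S.symm h') hne
      -- partner of b analysis for small cases
      rcases Nat.lt_or_ge b (a + 3) with hbs | hbs
      · -- b = a + 2 : single gap a+1
        have hb2 : b = a + 2 := by omega
        obtain ⟨y, hry⟩ := S.cover b (by omega)
        rcases K.partner_in b K.hb y hry with hyM | ⟨g1, g2, g3⟩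
        · rcases hM2 y hyM with h | h
          · subst h
            rcases (S.uniq hra1' (S.symm hry) (by omega)).2 with ⟨e1, e2⟩ | ⟨e1, e2⟩ <;> omega
          · exact (S.mem_lt hry).2.2 h.symm
        · have hy : y = a + 1 := by omega
          exact ha2 b K.hb (by omega) (S.symm (hy ▸ hry))
      rcases Nat.lt_or_ge b (a + 4) with hbs' | hbs'
      · -- b = a + 3 : gaps a+1, a+2
        have hb3 : b = a + 3 := by omega
        rcases gap13 (a+2) (by omega) (by omega) with h | h
        · obtain ⟨e1, e2⟩ := t1pin (a+2) (by omega) (by omega) (by omega) h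
          omega
        · have := (C4 (a+2) (by omega) (by rw [← hb3] at *; exact h)).1
          omega
      rcases Nat.lt_or_ge b (a + 5) with hbs'' | hbs''
      · -- b = a + 4 : gaps a+1, a+2, a+3
        have hb4 : b = a + 4 := by omega
        rcases gap13 (a+2) (by omega) (by omega) with h2 | h2
        swap
        · -- a+2 ~ b impossible : with some other type3? need a second; use C4? no:
          -- a+2 type3 alone is not contradictory... handle after a+3
          rcases gap13 (a+3) (by omega) (by omega) with h3 | h3
          · obtain ⟨e1, e2⟩ := t1pin (a+3) (by omega) (by omega) (by omega) h3
            -- vp = a+3, vm = a+1, a = vh : then a+2 ~ b : b's partner is a+2, a+2's partner is b & ?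
            -- a+2 : Rel (a+2) b and a+2 ∉ {vm, vp}... a+2 ≠ vh : fine. But b : Rel b (a+2):
            -- b = vp? vp = a+3 ≠ b. b ≠ vh (= a). so b has unique partner a+2. consistent!?
            -- contradiction: C1 with blocks B_Q = {a, a+1, a+3} and {a+2, b}
            refine interval_contra S C1 hbn K.hab ?_ ?_
            · rintro ⟨h, _⟩; omega
            · intro x hx1 hx2
              by_cases hxB : x = a ∨ x = a + 1 ∨ x = a + 3
              · refine ⟨{vh, vm, vp}, S.mem_qpart_BQ, ?_, ?_⟩
                · rcases hxB with h | h | h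
                  · rw [h, hvha]; left; rfl
                  · rw [h, ← e1]; right; left; rfl
                  · rw [h, ← e2]; right; right; rfl
                · rintro z (hz | hz | hz)
                  · rw [hz, hvha]; exact Set.mem_Icc.mpr ⟨le_refl a, by omega⟩
                  · rw [hz, e1]; exact Set.mem_Icc.mpr ⟨by omega, by omega⟩
                  · simp only [Set.mem_singleton_iff] at hz
                    rw [hz, e2]; exact Set.mem_Icc.mpr ⟨by omega, by omega⟩
              · have hx : x = a + 2 ∨ x = a + 4 := by omega
                refine ⟨{a+2, b}, S.mem_qpart_pair h2 (by omega) (by omega), ?_, ?_⟩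
                · rcases hx with h | h
                  · rw [h]; left; rfl
                  · rw [h, hb4]; right; rfl
                · rintro z (hz | hz)
                  · rw [hz]; exact Set.mem_Icc.mpr ⟨by omega, by omega⟩
                  · simp only [Set.mem_singleton_iff] at hz
                    rw [hz]; exact Set.mem_Icc.mpr ⟨by omega, by omega⟩
          · obtain ⟨e1, e2⟩ := t3pin (a+2) (a+3) (by omega) (by omega) (by omega) (by omega) (by omega) h2 h3
            rcases e2 with ⟨f1, f2⟩ | ⟨f1, f2⟩ <;> omega
        · obtain ⟨e1, e2⟩ := t1pin (a+2) (by omega) (by omega) (by omega) h2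
          omega
      · -- b ≥ a + 5 : gaps a+2, a+3, a+4 : pigeonhole
        have g2 := gap13 (a+2) (by omega) (by omega)
        have g3 := gap13 (a+3) (by omega) (by omega)
        have g4 := gap13 (a+4) (by omega) (by omega)
        rcases g2 with h2 | h2 <;> rcases g3 with h3 | h3 <;> rcases g4 with h4 | h4
        · obtain ⟨e1, e2⟩ := t1pin (a+2) (by omega) (by omega) (by omega) h2
          obtain ⟨f1, f2⟩ := t1pin (a+3) (by omega) (by omega) (by omega) h3
          omega
        · obtain ⟨e1, e2⟩ := t1pin (a+2) (by omega) (by omega) (by omega) h2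
          obtain ⟨f1, f2⟩ := t1pin (a+3) (by omega) (by omega) (by omega) h3
          omega
        · obtain ⟨e1, e2⟩ := t1pin (a+2) (by omega) (by omega) (by omega) h2
          obtain ⟨f1, f2⟩ := t1pin (a+4) (by omega) (by omega) (by omega) h4
          omega
        · -- a+2 type1, a+3 type3, a+4 type3
          obtain ⟨e1, e2⟩ := t3pin (a+3) (a+4) (by omega) (by omega) (by omega) (by omega) (by omega) h3 h4
          rcases e2 with ⟨p1, p2⟩ | ⟨p1, p2⟩ <;> omega
        · obtain ⟨e1, e2⟩ := t1pin (a+3) (by omega) (by omega) (by omega) h3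
          obtain ⟨f1, f2⟩ := t1pin (a+4) (by omega) (by omega) (by omega) h4
          omega
        · obtain ⟨e1, e2⟩ := t3pin (a+2) (a+4) (by omega) (by omega) (by omega) (by omega) (by omega) h2 h4
          obtain ⟨f1, f2⟩ := t1pin (a+3) (by omega) (by omega) (by omega) h3
          rcases e2 with ⟨p1, p2⟩ | ⟨p1, p2⟩ <;> omega
        · obtain ⟨e1, e2⟩ := t3pin (a+2) (a+3) (by omega) (by omega) (by omega) (by omega) (by omega) h2 h3
          rcases e2 with ⟨p1, p2⟩ | ⟨p1, p2⟩ <;> omega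
        · obtain ⟨e1, e2⟩ := t3pin (a+2) (a+3) (by omega) (by omega) (by omega) (by omega) (by omega) h2 h3
          rcases e2 with ⟨p1, p2⟩ | ⟨p1, p2⟩ <;> omega
  · -- vh = a + 1
    have ogap : ∀ y, a < y → y < b → y ∉ M → y ≠ a+1 →
        (∀ x ∈ M, x < b → x < y) ∧ Rel Q y b := by
      intro y hy1 hy2 hy3 hy4
      rcases K.gcl hy1 hy2 hy3 with ⟨g1, g2⟩ | ⟨ge, _⟩ | ⟨g1, g2⟩ | ⟨ge, _⟩
      · exfalso
        have := S.uniq' (S.symm g2) hra1' (by omega)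
        omega
      · omega
      · exact ⟨g1, g2⟩
      · omega
    by_cases hg2 : ∃ y, a < y ∧ y < b ∧ y ∉ M ∧ y ≠ a+1
    · obtain ⟨y, hy1, hy2, hy3, hy4⟩ := hg2
      obtain ⟨h1, h2⟩ := ogap y hy1 hy2 hy3 hy4
      have hnoz : ∀ z, y < z → z < b → False := by
        intro z hz1 hz2
        have hzM : z ∉ M := fun h => absurd (h1 z h hz2) (by omega)
        obtain ⟨_, g2⟩ := ogap z (by omega) hz2 hzM (by omega)
        have := S.uniq' (S.symm h2) (S.symm g2) (by omega)
        omega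
      have hyb : y + 1 = b := by
        by_contra h
        exact hnoz (y+1) (by omega) (by omega)
      rcases (C4 y (by omega) (by rw [hyb]; exact h2)).1 with h | h <;> omega
    · push_neg at hg2
      have hfull : ∀ x, a ≤ x → x ≤ b → x ≠ a+1 → x ∈ M := by
        intro x h1 h2 h3
        by_contra hxM
        have hxa : a < x := by
          rcases Nat.eq_or_lt_of_le h1 with h | h
          · exact absurd (h ▸ K.ha) hxM
          · exact h
        have hxb : x < b := by
          rcases Nat.eq_or_lt_of_le h2 with h | h
          · exact absurd (by rw [h]; exact K.hb) hxM
          · exact h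
        exact h3 (hg2 x hxa hxb hxM)
      have hamem : a = vm ∨ a = vp := S.partner_vh (by rw [hvha1]; exact hraa1)
      obtain ⟨t, hrt, hta⟩ : ∃ t, Rel Q vh t ∧ t ≠ a := by
        rcases hamem with h | h
        · exact ⟨vp, S.rhp, by omega⟩
        · exact ⟨vm, S.rhm, by omega⟩
      have hta1 : t ≠ a + 1 := by
        have := (S.mem_lt hrt).2.2; omega
      have htM : t ∉ M := by
        intro h
        have h1 := K.hmin t h
        have h2 : a + 1 < t := by omega
        exact ha2 t h h2 (by rw [← hvha1]; exact hrt)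
      have htout : t < a ∨ b < t := by
        by_contra h
        push_neg at h
        exact htM (hfull t h.1 h.2 hta1)
      by_cases hb2 : b = a + 2
      · -- M = {a, a+2}
        obtain ⟨y, hry⟩ := S.cover b (by omega)
        rcases K.partner_in b K.hb y hry with hyM | ⟨g1, g2, g3⟩
        · have hyb' := (S.mem_lt hry).2.2
          have hy3 := K.hmin y hyM
          have hy4 := K.hmax y hyM
          have hyn1 : y ≠ a + 1 := fun hh => hvM (hh ▸ hyM)
          have hya : y = a := by omega
          rw [hya] at hry
          have := S.uniq' (S.symm hry) hra1' (by omega)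
          omega
        · have hy : y = a+1 := hg2 y g1 g2 g3
          exact ha2 b K.hb (by omega) (S.symm (hy ▸ hry))
      · -- b ≥ a + 3 : interval [a+2, b]
        refine interval_contra S C1 hbn (show a+2 < b by omega) (by rintro ⟨h, _⟩; omega) ?_
        intro x h1 h2
        have hxM : x ∈ M := hfull x (by omega) h2 (by omega)
        obtain ⟨y, hry⟩ := S.cover x (by omega)
        have hyM : y ∈ M := by
          rcases K.partner_in x hxM y hry with h | ⟨g1, g2, g3⟩
          · exact h
          · exfalso
            have hy : y = a + 1 := hg2 y g1 g2 g3
            have hrvx : Rel Q vh x := by rw [hvha1]; exact S.symm (hy ▸ hry)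
            rcases S.partner_vh hrvx with h' | h' <;> rcases hamem with h'' | h''
            · omega
            · rcases S.partner_vh hrt with ht' | ht' <;> omega
            · rcases S.partner_vh hrt with ht' | ht' <;> omega
            · omega
        have hyna : y ≠ a := by
          rintro rfl
          have := S.uniq' (S.symm hry) hra1' (by omega)
          omega
        have hy1' := K.hmin y hyM
        have hy2' := K.hmax y hyM
        have hyna1 : y ≠ a + 1 := fun hh => hvM (hh ▸ hyM)
        refine ⟨{x, y}, S.mem_qpart_pair hry (by omega) (by omega), by left; rfl, ?_⟩
        rintro z (hz | hz)
        · rw [hz]; exact Set.mem_Icc.mpr ⟨h1, h2⟩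
        · simp only [Set.mem_singleton_iff] at hz
          rw [hz]; exact Set.mem_Icc.mpr ⟨by omega, by omega⟩

lemma beta_k2 (S : Setup n Q vh vm vp)
    (C1 : IrreducibleOn (Set.Iio n) (QPart Q vh vm vp))
    (C2 : vm + 2 ≤ vp)
    (C3 : ∀ v, v < n → Rel Q v (v+2) → Rel Q (v+1) (v+3) → vh = v ∨ vh = v + 3)
    (C4 : ∀ v, v < n → Rel Q v (v+1) → (vh = v ∨ vh = v + 1) ∧ vh ≠ 0 ∧ vh ≠ n - 1)
    (K : MCtx n Q vh vm vp M a b) {v : ℕ}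
    (hva : a < v) (hvb : v < b) (hvM : v ∉ M) (hvn : v < n)
    (hb1 : ∀ x ∈ M, x < v → ¬Rel Q v x) (hb2 : ∀ x ∈ M, v < x → Rel Q v x)
    (hOnly : ∀ x ∈ M, v < x → x = b) (hrvb : Rel Q v b)
    (hzM : ∀ z, v < z → z < b → z ∉ M) (hbv1 : b ≠ v + 1) (hva1 : v = a + 1) : False := by
  subst hva1
  have hmp := S.hmp
  have hbn := K.hbn
  have hn := S.hn
  have hab := K.hab
  have hM2 : ∀ x ∈ M, x = a ∨ x = b := by
    intro x hx
    have h1 := K.hmin x hx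
    have h2 := K.hmax x hx
    rcases Nat.eq_or_lt_of_le h1 with h | h
    · exact Or.inl h.symm
    · have hx1 : x ≠ a + 1 := fun hh => hvM (hh ▸ hx)
      exact Or.inr (hOnly x hx (by omega))
  have gap13 : ∀ w, a < w → w < b → Rel Q w a ∨ Rel Q w b := by
    intro w hw1 hw2
    have hwM : w ∉ M := by
      intro h
      rcases hM2 w h with h' | h' <;> omega
    rcases K.gcl hw1 hw2 hwM with ⟨_, g2⟩ | ⟨_, c, hcM, g1, g2, _⟩ | ⟨_, g2⟩ | ⟨_, c, hcM, g1, g2, _⟩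
    · exact Or.inl g2
    · exfalso; rcases hM2 c hcM with h | h <;> omega
    · exact Or.inr g2
    · exfalso; rcases hM2 c hcM with h | h <;> omega
  have t3pin : ∀ w, a < w → w < b → w ≠ a + 1 → Rel Q w b → b = vh ∧ vm = a + 1 ∧ vp = w := by
    intro w hw1 hw2 hw3 hw4
    have huq := S.uniq (S.symm hrvb) (S.symm hw4) (fun hh => hw3 hh.symm)
    refine ⟨huq.1, ?_⟩
    rcases huq.2 with ⟨e1, e2⟩ | ⟨e1, e2⟩
    · exact ⟨e1.symm, e2.symm⟩
    · exfalso
      -- a+1 = vp, w = vm : but w > a+1 and vm < vp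
      have hwa1 : a + 1 < w := by omega
      omega
  have t1pin : ∀ w w', a < w → w < b → a < w' → w' < b → w ≠ w' →
      Rel Q w a → Rel Q w' a → a = vh ∧ ((w = vm ∧ w' = vp) ∨ (w = vp ∧ w' = vm)) :=
    fun w w' _ _ _ _ hne h h' => S.uniq (S.symm h) (S.symm h') hne
  rcases Nat.lt_or_ge b (a + 4) with hb3 | hb4
  · -- b = a + 3
    have hb3' : b = a + 3 := by omega
    rcases gap13 (a+2) (by omega) (by omega) with h2 | h2
    · -- a+2 type1 : C3 applies
      have hrb' : Rel Q (a+1) (a+3) := by rw [hb3'] at hrvb; exact hrvb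
      rcases C3 a (by omega) (S.symm h2) hrb' with hvha | hvhb
      · -- vh = a : other partner of a
        obtain ⟨t, hrt, ht2⟩ : ∃ t, Rel Q vh t ∧ t ≠ a + 2 := by
          rcases S.partner_vh (show Rel Q vh (a+2) by rw [hvha]; exact S.symm h2) with h | h
          · exact ⟨vp, S.rhp, by omega⟩
          · exact ⟨vm, S.rhm, by omega⟩
        have hrat : Rel Q a t := hvha ▸ hrt
        have htne := (S.mem_lt hrat).2.2
        rcases K.partner_in a K.ha t hrat with htMem | ⟨g1, g2, g3⟩
        · rcases hM2 t htMem with h | h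
          · exact htne h.symm
          · -- t = b : Rel a b and Rel a (a+2) pin {vm,vp} = {a+2,b} : contra C2
            have huq := S.uniq (S.symm h2) (h ▸ hrat) (by omega)
            rcases huq.2 with ⟨e1, e2⟩ | ⟨e1, e2⟩ <;> omega
        · -- t is a gap : t = a+1 or a+2
          have : t = a + 1 ∨ t = a + 2 := by omega
          rcases this with h | h
          · exact hb1 a K.ha (by omega) (S.symm (h ▸ hrat))
          · exact ht2 h
      · -- vh = a + 3 = b : partner of a
        have hvhb' : b = vh := by omega
        obtain ⟨y, hry⟩ := S.cover a (by omega)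
        have hyne := (S.mem_lt hry).2.2
        have pinab : Rel Q a b → False := by
          intro h
          have huq := S.uniq (S.symm h) (S.symm hrvb) (by omega)
          rcases huq.2 with ⟨e1, e2⟩ | ⟨e1, e2⟩ <;> omega
        rcases K.partner_in a K.ha y hry with hyMem | ⟨g1, g2, g3⟩
        · rcases hM2 y hyMem with h | h
          · exact hyne h.symm
          · exact pinab (h ▸ hry)
        · have : y = a + 1 ∨ y = a + 2 := by omega
          rcases this with h | h
          · exact hb1 a K.ha (by omega) (S.symm (h ▸ hry))
          · -- y = a+2 : Rel a (a+2) ; other partner t' of vh = b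
            obtain ⟨t', hrt', ht'2⟩ : ∃ t', Rel Q vh t' ∧ t' ≠ a + 1 := by
              rcases S.partner_vh (by rw [← hvhb']; exact S.symm hrvb) with hh | hh
              · exact ⟨vp, S.rhp, by omega⟩
              · exact ⟨vm, S.rhm, by omega⟩
            have hrbt : Rel Q b t' := by rw [hvhb']; exact hrt'
            have ht'ne := (S.mem_lt hrbt).2.2
            rcases K.partner_in b K.hb t' hrbt with htMem | ⟨g1', g2', g3'⟩
            · rcases hM2 t' htMem with hh | hh
              · exact pinab (S.symm (hh ▸ hrbt))
              · exact ht'ne hh.symm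
            · have : t' = a + 1 ∨ t' = a + 2 := by omega
              rcases this with hh | hh
              · exact ht'2 hh
              · -- t' = a+2 : a+2 has partners a and b : a+2 = vh = b, contra
                have := S.uniq' (S.symm (h ▸ hry)) (S.symm (hh ▸ hrbt)) (by omega)
                omega
    · -- a+2 type3 : pin contradicts C2
      obtain ⟨e1, e2, e3⟩ := t3pin (a+2) (by omega) (by omega) (by omega) h2
      omega
  · -- b ≥ a + 4
    rcases gap13 (a+2) (by omega) (by omega) with h2 | h2
    swap
    · obtain ⟨e1, e2, e3⟩ := t3pin (a+2) (by omega) (by omega) (by omega) h2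
      omega
    rcases gap13 (a+3) (by omega) (by omega) with h3 | h3
    · obtain ⟨e1, e2⟩ := t1pin (a+2) (a+3) (by omega) (by omega) (by omega) (by omega) (by omega) h2 h3
      rcases e2 with ⟨p1, p2⟩ | ⟨p1, p2⟩ <;> omega
    obtain ⟨e1, e2, e3⟩ := t3pin (a+3) (by omega) (by omega) (by omega) h3
    rcases Nat.lt_or_ge b (a + 5) with hb4' | hb5
    · -- b = a + 4, vh = b, vm = a+1, vp = a+3, block {a, a+2} : C1 contradiction
      have hb4'' : b = a + 4 := by omega
      have hvhn1 : vh ≠ n - 1 := by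
        have hr : Rel Q (a+3) (a+3+1) := by
          have : Rel Q vh vp := S.rhp
          rw [← e1, e3, hb4''] at this
          exact S.symm this
        exact (C4 (a+3) (by omega) hr).2.2
      refine interval_contra S C1 hbn hab (by rintro ⟨h1', h2'⟩; omega) ?_
      intro x hx1 hx2
      by_cases hxB : x = a ∨ x = a + 2
      · refine ⟨{a+2, a}, S.mem_qpart_pair h2 (by omega) (by omega), ?_, ?_⟩
        · rcases hxB with h | h
          · rw [h]; right; rfl
          · rw [h]; left; rfl
        · rintro z (hz | hz)
          · rw [hz]; exact Set.mem_Icc.mpr ⟨by omega, by omega⟩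
          · simp only [Set.mem_singleton_iff] at hz
            rw [hz]; exact Set.mem_Icc.mpr ⟨le_refl a, by omega⟩
      · have hx : x = a + 1 ∨ x = a + 3 ∨ x = a + 4 := by omega
        refine ⟨{vh, vm, vp}, S.mem_qpart_BQ, ?_, ?_⟩
        · rcases hx with h | h | h
          · rw [h, ← e2]; right; left; rfl
          · rw [h, ← e3]; right; right; rfl
          · rw [h, ← hb4'', e1]; left; rfl
        · rintro z (hz | hz | hz)
          · rw [hz, ← e1]; exact Set.mem_Icc.mpr ⟨by omega, by omega⟩
          · rw [hz, e2]; exact Set.mem_Icc.mpr ⟨by omega, by omega⟩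
          · simp only [Set.mem_singleton_iff] at hz
            rw [hz, e3]; exact Set.mem_Icc.mpr ⟨by omega, by omega⟩
    · -- b ≥ a + 5 : consider a + 4
      rcases gap13 (a+4) (by omega) (by omega) with h4 | h4
      · obtain ⟨f1, f2⟩ := t1pin (a+2) (a+4) (by omega) (by omega) (by omega) (by omega) (by omega) h2 h4
        omega
      · obtain ⟨f1, f2, f3⟩ := t3pin (a+4) (by omega) (by omega) (by omega) h4
        omega

lemma beta_case (S : Setup n Q vh vm vp)
    (C1 : IrreducibleOn (Set.Iio n) (QPart Q vh vm vp))
    (C2 : vm + 2 ≤ vp)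
    (C3 : ∀ v, v < n → Rel Q v (v+2) → Rel Q (v+1) (v+3) → vh = v ∨ vh = v + 3)
    (C4 : ∀ v, v < n → Rel Q v (v+1) → (vh = v ∨ vh = v + 1) ∧ vh ≠ 0 ∧ vh ≠ n - 1)
    (K : MCtx n Q vh vm vp M a b) {v : ℕ}
    (hva : a < v) (hvb : v < b) (hvM : v ∉ M)
    (hfill : ∀ w, a ≤ w → w < v → w ∈ M) (hvn : v < n)
    (hb1 : ∀ x ∈ M, x < v → ¬Rel Q v x) (hb2 : ∀ x ∈ M, v < x → Rel Q v x) : False := by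
  have hmp := S.hmp
  have hbn := K.hbn
  have hn := S.hn
  by_cases hOnly : ∀ x ∈ M, v < x → x = b
  · have hrvb : Rel Q v b := hb2 b K.hb hvb
    have hzM : ∀ z, v < z → z < b → z ∉ M := by
      intro z h1 h2 hz
      have := hOnly z hz h1; omega
    by_cases hbv1 : b = v + 1
    · -- top part is just {b} with b = v+1 : use C4 at v
      have hrvb' : Rel Q v (v+1) := by rw [hbv1] at hrvb; exact hrvb
      obtain ⟨hvh01, hvh0, hvhn1⟩ := C4 v (by omega) hrvb'
      rcases hvh01 with hvhv | hvhb
      · -- vh = v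
        by_cases hva1 : v = a + 1
        · -- M = {a, b} : contradiction via the partner of a
          obtain ⟨y, hry⟩ := S.cover a (by omega)
          rcases K.partner_in a K.ha y hry with hyM | ⟨g1, g2, g3⟩
          · have hyb : y = b := by
              have h1 := K.hmin y hyM
              have hne := (S.mem_lt hry).2.2
              have hyv : y ≠ v := fun hh => hvM (hh ▸ hyM)
              exact hOnly y hyM (by omega)
            have := S.uniq' (S.symm (hyb ▸ hry)) (S.symm hrvb) (by omega)
            omega
          · have hyv : y = v := by omega
            exact hb1 a K.ha (by omega) (S.symm (hyv ▸ hry))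
        · -- v ≥ a + 2 : interval [a, v-1]
          refine interval_contra S C1 (show v-1 < n by omega) (show a < v-1 by omega)
            (by rintro ⟨h1', h2'⟩; omega) ?_
          intro x h1 h2
          have hxM : x ∈ M := hfill x h1 (by omega)
          obtain ⟨y, hry⟩ := S.cover x (by omega)
          have hyM : y ∈ M := by
            rcases K.partner_in x hxM y hry with h | ⟨g1, g2, g3⟩
            · exact h
            · exfalso
              have hyv : y = v := by
                rcases Nat.lt_or_ge y v with h' | h'
                · exact absurd (hfill y (by omega) h') g3
                · omega
              exact hb1 x hxM (by omega) (S.symm (hyv ▸ hry))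
          have hylv : y < v := by
            rcases Nat.lt_or_ge y v with h' | h'
            · exact h'
            · exfalso
              have hyv' : y ≠ v := fun hh => hvM (hh ▸ hyM)
              have hyb : y = b := hOnly y hyM (by omega)
              have := S.uniq' (S.symm (hyb ▸ hry)) (S.symm hrvb) (by omega)
              omega
          refine ⟨{x, y}, S.mem_qpart_pair hry (by omega) (by omega), by left; rfl, ?_⟩
          rintro z (hz | hz)
          · rw [hz]; exact Set.mem_Icc.mpr ⟨h1, h2⟩
          · simp only [Set.mem_singleton_iff] at hz
            rw [hz]; exact Set.mem_Icc.mpr ⟨K.hmin y hyM, by omega⟩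
      · -- vh = b = v+1
        have hvmem : v = vm ∨ v = vp := S.partner_vh (by rw [hvhb, ← hbv1]; exact S.symm hrvb)
        obtain ⟨t, hrt, htv⟩ : ∃ t, Rel Q vh t ∧ t ≠ v := by
          rcases hvmem with h | h
          · exact ⟨vp, S.rhp, by omega⟩
          · exact ⟨vm, S.rhm, by omega⟩
        have htb : t ≠ b := fun hh => (S.mem_lt hrt).2.2 (by omega)
        have htM : t ∈ M := by
          rcases K.partner_in b K.hb t (by rw [hbv1, ← hvhb]; exact hrt) with h | ⟨g1, g2, g3⟩
          · exact h
          · exfalso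
            rcases Nat.lt_or_ge t v with h' | h'
            · exact g3 (hfill t (by omega) h')
            · omega
        have htlv : t < v := by
          rcases Nat.lt_or_ge t v with h' | h'
          · exact h'
          · exfalso
            have hne : t ≠ v := htv
            have := hOnly t htM (by omega)
            omega
        have hpin : vm = t ∧ vp = v := by
          rcases hvmem with h | h <;> rcases S.partner_vh hrt with h' | h'
          · omega
          · omega
          · exact ⟨h'.symm, h.symm⟩
          · omega
        refine interval_contra S C1 hbn K.hab (by rintro ⟨h1', h2'⟩; omega) ?_
        intro x h1 h2
        by_cases hxB : x = v ∨ x = b ∨ x = t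
        · refine ⟨{vh, vm, vp}, S.mem_qpart_BQ, ?_, ?_⟩
          · rcases hxB with h | h | h
            · rw [h, ← hpin.2]; right; right; rfl
            · rw [h, hbv1, ← hvhb]; left; rfl
            · rw [h, ← hpin.1]; right; left; rfl
          · rintro z (hz | hz | hz)
            · rw [hz, hvhb]; exact Set.mem_Icc.mpr ⟨by omega, by omega⟩
            · rw [hz, hpin.1]; exact Set.mem_Icc.mpr ⟨K.hmin t htM, by omega⟩
            · simp only [Set.mem_singleton_iff] at hz
              rw [hz, hpin.2]; exact Set.mem_Icc.mpr ⟨by omega, by omega⟩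
        · push_neg at hxB
          obtain ⟨hxv, hxb, hxt⟩ := hxB
          have hxlv : x < v := by
            rcases Nat.lt_or_ge x v with h' | h'
            · exact h'
            · exfalso; omega
          have hxM : x ∈ M := hfill x h1 hxlv
          obtain ⟨y, hry⟩ := S.cover x (by omega)
          have hyM : y ∈ M := by
            rcases K.partner_in x hxM y hry with h | ⟨g1, g2, g3⟩
            · exact h
            · exfalso
              have hyv : y = v := by
                rcases Nat.lt_or_ge y v with h' | h'
                · exact absurd (hfill y (by omega) h') g3
                · omega
              exact hb1 x hxM (by omega) (S.symm (hyv ▸ hry))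
          have hylv : y < v := by
            rcases Nat.lt_or_ge y v with h' | h'
            · exact h'
            · exfalso
              have hyv' : y ≠ v := fun hh => hvM (hh ▸ hyM)
              have hyb : y = b := hOnly y hyM (by omega)
              have hrvx : Rel Q vh x := by rw [hvhb, ← hbv1]; exact S.symm (hyb ▸ hry)
              rcases S.partner_vh hrvx with h'' | h'' <;> omega
          refine ⟨{x, y}, S.mem_qpart_pair hry (by omega) (by omega), by left; rfl, ?_⟩
          rintro z (hz | hz)
          · rw [hz]; exact Set.mem_Icc.mpr ⟨h1, h2⟩
          · simp only [Set.mem_singleton_iff] at hz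
            rw [hz]; exact Set.mem_Icc.mpr ⟨K.hmin y hyM, by omega⟩
    · -- b ≥ v + 2
      by_cases hva1 : v = a + 1
      · -- M = {a, b} : the k = 2 beta analysis
        exact beta_k2 S C1 C2 C3 C4 K hva hvb hvM hvn hb1 hb2 hOnly hrvb hzM hbv1 hva1
      · -- v ≥ a + 2 : v+1 is a top gap with Rel (v+1) b, contradiction with C2
        have hz1 : v + 1 ∉ M := hzM (v+1) (by omega) (by omega)
        have hcls : Rel Q (v+1) b := by
          rcases K.gcl (show a < v+1 by omega) (show v+1 < b by omega) hz1 with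
            ⟨g1, g2⟩ | ⟨ge, c, hcM, gc1, gc2, gc3, gc4, gc5⟩ | ⟨g1, g2⟩ |
            ⟨ge, c, hcM, gc1, gc2, gc3, gc4, gc5⟩
          · exfalso
            have := g1 (a+1) (hfill (a+1) (by omega) (by omega)) (by omega)
            omega
          · exfalso
            have ha1M := hfill (a+1) (by omega) (by omega)
            rcases gc5 (a+1) ha1M (by omega) with h | h
            · omega
            · omega
          · exact g2
          · exfalso
            have := hOnly c hcM (by omega)
            omega
        have huq := S.uniq (S.symm hrvb) (S.symm hcls) (by omega)
        rcases huq.2 with ⟨e1, e2⟩ | ⟨e1, e2⟩ <;> omega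
  · -- two elements of M above v
    push_neg at hOnly
    obtain ⟨x1, hx1M, hvx1, hx1b⟩ := hOnly
    have hx1lb : x1 < b := by have := K.hmax x1 hx1M; omega
    have hr1 : Rel Q v x1 := hb2 x1 hx1M hvx1
    have hrb : Rel Q v b := hb2 b K.hb hvb
    have huq := S.uniq hr1 hrb hx1b
    have hx1vm : x1 = vm ∧ b = vp := by
      rcases huq.2 with ⟨e1, e2⟩ | ⟨e1, e2⟩
      · exact ⟨e1, e2⟩
      · exfalso; omega
    have hvvh : v = vh := huq.1
    have hwM : vm + 1 ∉ M := by
      intro h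
      have hr := hb2 (vm+1) h (by omega)
      rcases S.partner_vh (by rw [← hvvh]; exact hr) with h' | h' <;> omega
    rcases K.gcl (show a < vm+1 by omega) (show vm+1 < b by omega) hwM with
      ⟨g1, g2⟩ | ⟨ge, _⟩ | ⟨g1, g2⟩ | ⟨ge, _⟩
    · have := g1 x1 hx1M (by omega)
      omega
    · omega
    · have g2' : Rel Q (vm+1) vp := by rw [← hx1vm.2]; exact g2
      refine S.vh_ne_vp ?_
      exact (S.uniq' (S.symm g2') (S.symm S.rhp) (by omega)).symm
    · omega

theorem no_module (S : Setup n Q vh vm vp)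
    (C1 : IrreducibleOn (Set.Iio n) (QPart Q vh vm vp))
    (C2 : vm + 2 ≤ vp)
    (C3 : ∀ v, v < n → Rel Q v (v+2) → Rel Q (v+1) (v+3) → vh = v ∨ vh = v + 3)
    (C4 : ∀ v, v < n → Rel Q v (v+1) → (vh = v ∨ vh = v + 1) ∧ vh ≠ 0 ∧ vh ≠ n - 1)
    {M : Set ℕ} (hM : IsModuleOn Q (Set.Iio n) M)
    (hnt : ¬ IsTrivialSubset (Set.Iio n) M) : False := by
  have hn := S.hn
  rw [IsTrivialSubset] at hnt
  push_neg at hnt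
  obtain ⟨hMne, hMsing, hMfull⟩ := hnt
  have hMnonempty : M.Nonempty := hMne
  have hMfin : M.Finite := (Set.finite_Iio n).subset hM.1
  obtain ⟨a, haM, hamin⟩ := Set.exists_min_image M id hMfin hMnonempty
  obtain ⟨b, hbM, hbmax⟩ := Set.exists_max_image M id hMfin hMnonempty
  simp only [id] at hamin hbmax
  have hab : a < b := by
    rcases Nat.lt_or_ge a b with h | h
    · exact h
    · exfalso
      apply hMsing a
      apply Set.Subset.antisymm
      · intro x hx
        have h1 := hamin x hx
        have h2 := hbmax x hx
        have : x = a := by omega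
        exact this ▸ rfl
      · intro x hx
        simp only [Set.mem_singleton_iff] at hx
        exact hx ▸ haM
  have K : MCtx n Q vh vm vp M a b :=
    ⟨S, C2, haM, hbM, hamin, hbmax, hM.1, uni2_of_module S hM, hab⟩
  have hbn : b < n := K.hbn
  by_cases hgap : ∃ w, a < w ∧ w < b ∧ w ∉ M
  · -- Part B : there is a gap
    obtain ⟨v, ⟨hva, hvb, hvM⟩, hvmin⟩ :=
      Set.exists_min_image {w | a < w ∧ w < b ∧ w ∉ M} id
        ((Set.finite_Iio n).subset (fun w hw => lt_trans hw.2.1 hbn)) hgap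
    simp only [id] at hvmin
    have hfill : ∀ w, a ≤ w → w < v → w ∈ M := by
      intro w hw1 hw2
      by_contra hwM
      rcases Nat.eq_or_lt_of_le hw1 with h | h
      · exact hwM (h ▸ haM)
      · exact absurd (hvmin w ⟨h, by omega, hwM⟩) (by omega)
    have hvn : v < n := by omega
    rcases K.uni v hvn hvM with ⟨ha1, ha2⟩ | ⟨hb1, hb2⟩
    · -- α case at the minimal gap v
      exact alpha_case S C1 C2 C3 C4 K hva hvb hvM hfill hvn ha1 ha2
    · -- β case at the minimal gap v
      exact beta_case S C1 C2 C3 C4 K hva hvb hvM hfill hvn hb1 hb2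
  · -- Part A : M is an interval
    push_neg at hgap
    have hfull : ∀ x, a ≤ x → x ≤ b → x ∈ M := by
      intro x h1 h2
      rcases Nat.eq_or_lt_of_le h1 with h | h
      · exact h ▸ haM
      · rcases Nat.eq_or_lt_of_le h2 with h' | h'
        · exact h' ▸ hbM
        · exact hgap x h h'
    have hclose : ∀ x ∈ M, ∀ y, Rel Q x y → y ∈ M := by
      intro x hxM y hr
      rcases K.partner_in x hxM y hr with h | ⟨h1, h2, h3⟩
      · exact h
      · exact absurd (hgap y h1 h2) h3
    have hMeq : M = Set.Icc a b := by
      apply Set.Subset.antisymm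
      · intro x hx; exact ⟨hamin x hx, hbmax x hx⟩
      · intro x hx; exact hfull x hx.1 hx.2
    refine interval_contra S C1 hbn hab ?_ ?_
    · rintro ⟨rfl, rfl⟩
      apply hMfull
      rw [hMeq]
      ext x; simp only [Set.mem_Icc, Set.mem_Iio]; omega
    · intro x h1 h2
      have hxM : x ∈ M := hfull x h1 h2
      have hsubIcc : ∀ z ∈ M, z ∈ Set.Icc a b := by
        intro z hz; exact ⟨hamin z hz, hbmax z hz⟩
      obtain ⟨y, hr⟩ := S.cover x (hM.1 hxM)
      have hyM : y ∈ M := hclose x hxM y hr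
      by_cases hvhxy : x = vh ∨ y = vh
      · have hvhM : vh ∈ M := by
          rcases hvhxy with h | h
          · exact h ▸ hxM
          · exact h ▸ hyM
        have hvmM : vm ∈ M := hclose vh hvhM vm S.rhm
        have hvpM : vp ∈ M := hclose vh hvhM vp S.rhp
        refine ⟨{vh, vm, vp}, S.mem_qpart_BQ, ?_, ?_⟩
        · rcases hvhxy with h | h
          · rw [h]; left; rfl
          · rcases S.partner_vh (h ▸ S.symm hr) with h' | h'
            · rw [h']; right; left; rfl
            · rw [h']; right; right; rfl
        · intro z hz
          rcases hz with h | h | h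
          · exact h ▸ hsubIcc vh hvhM
          · exact h ▸ hsubIcc vm hvmM
          · simp only [Set.mem_singleton_iff] at h
            exact h ▸ hsubIcc vp hvpM
      · push_neg at hvhxy
        refine ⟨{x, y}, S.mem_qpart_pair hr hvhxy.1 hvhxy.2, by left; rfl, ?_⟩
        intro z hz
        rcases hz with h | h
        · exact h ▸ hsubIcc x hxM
        · simp only [Set.mem_singleton_iff] at h
          exact h ▸ hsubIcc y hyM

-- ============ forward direction ============

lemma Setup.block_pair (S : Setup n Q vh vm vp) (hQ2 : ∀ B ∈ Q, B.ncard = 2)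
    {B : Set ℕ} (hB : B ∈ Q) {x : ℕ} (hx : x ∈ B) : ∃ y, Rel Q x y ∧ B = {x, y} := by
  obtain ⟨u, w, huw, rfl⟩ := Set.ncard_eq_two.mp (hQ2 B hB)
  rcases hx with rfl | rfl
  · exact ⟨w, hB, rfl⟩
  · exact ⟨u, by rwa [Rel, Set.pair_comm], Set.pair_comm u x⟩

lemma Setup.qpart_eq (S : Setup n Q vh vm vp) (hQ2 : ∀ B ∈ Q, B.ncard = 2)
    {B B' : Set ℕ} (hB : B ∈ QPart Q vh vm vp) (hB' : B' ∈ QPart Q vh vm vp)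
    {x : ℕ} (hx : x ∈ B) (hx' : x ∈ B') : B = B' := by
  have main : ∀ C : Set ℕ, C ∈ Q → C ∉ ({({vh, vm} : Set ℕ), ({vh, vp} : Set ℕ)} : Set (Set ℕ)) →
      ∀ z ∈ C, z ∉ ({vh, vm, vp} : Set ℕ) := by
    intro C hCQ hCne z hzC hzB
    obtain ⟨y, hry, hCeq⟩ := S.block_pair hQ2 hCQ hzC
    rcases hzB with rfl | rfl | rfl
    · rcases S.partner_vh hry with rfl | rfl
      · exact hCne (by left; exact hCeq)
      · exact hCne (by right; exact hCeq)
    · by_cases hyvh : y = vh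
      · subst hyvh
        exact hCne (by left; rw [hCeq, Set.pair_comm])
      · exact absurd (S.partner_unique (fun hh => S.vh_ne_vm hh.symm) hry (S.symm S.rhm)) hyvh
    · by_cases hyvh : y = vh
      · subst hyvh
        exact hCne (by right; simp only [Set.mem_singleton_iff]; rw [hCeq, Set.pair_comm])
      · exact absurd (S.partner_unique (fun hh => S.vh_ne_vp hh.symm) hry (S.symm S.rhp)) hyvh
  rcases hB with ⟨hBQ, hBne⟩ | hBq <;> rcases hB' with ⟨hBQ', hBne'⟩ | hBq'
  · -- both ordinary blocks
    obtain ⟨y, hry, hBeq⟩ := S.block_pair hQ2 hBQ hx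
    obtain ⟨y', hry', hBeq'⟩ := S.block_pair hQ2 hBQ' hx'
    by_cases hyy : y = y'
    · rw [hBeq, hBeq', hyy]
    · exfalso
      have hxvh := S.uniq' hry hry' hyy
      subst hxvh
      rcases S.partner_vh hry with rfl | rfl
      · exact hBne (by left; exact hBeq)
      · exact hBne (by right; simp only [Set.mem_singleton_iff]; exact hBeq)
  · simp only [Set.mem_singleton_iff] at hBq'
    exact absurd (hBq' ▸ hx') (main B hBQ hBne x hx)
  · simp only [Set.mem_singleton_iff] at hBq
    exact absurd (hBq ▸ hx) (main B' hBQ' hBne' x hx')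
  · simp only [Set.mem_singleton_iff] at hBq hBq'
    rw [hBq, hBq']

/-- a union of QPart blocks forming a nontrivial interval is a nontrivial module. -/
lemma reducible_module (S : Setup n Q vh vm vp) (hQ2 : ∀ B ∈ Q, B.ncard = 2)
    {R : Set (Set ℕ)} (hR : R ⊆ QPart Q vh vm vp)
    (hInt : IsNontrivialIntervalOf (Set.Iio n) (⋃₀ R)) :
    IsModuleOn Q (Set.Iio n) (⋃₀ R) := by
  set I := ⋃₀ R with hI
  have hsub : I ⊆ Set.Iio n := hInt.1.1
  have hno : ∀ v, v ∉ I → ∀ x ∈ I, ¬ Rel Q v x := by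
    intro v hvI x hxI hr
    obtain ⟨B, hBR, hxB⟩ := hxI
    have hBQp : B ∈ QPart Q vh vm vp := hR hBR
    by_cases hB0 : ({v, x} : Set ℕ) ∈ ({({vh, vm} : Set ℕ), ({vh, vp} : Set ℕ)} : Set (Set ℕ))
    · -- the pair is a vh-block : both v, x ∈ B_Q
      have hvB : v ∈ ({vh, vm, vp} : Set ℕ) ∧ x ∈ ({vh, vm, vp} : Set ℕ) := by
        rcases hB0 with h | h
        · constructor
          · have : v ∈ ({vh, vm} : Set ℕ) := by rw [← h]; left; rfl
            rcases this with h' | h'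
            · left; exact h'
            · right; left; exact h'
          · have : x ∈ ({vh, vm} : Set ℕ) := by rw [← h]; right; rfl
            rcases this with h' | h'
            · left; exact h'
            · right; left; exact h'
        · simp only [Set.mem_singleton_iff] at h
          constructor
          · have : v ∈ ({vh, vp} : Set ℕ) := by rw [← h]; left; rfl
            rcases this with h' | h'
            · left; exact h'
            · right; right; exact h'
          · have : x ∈ ({vh, vp} : Set ℕ) := by rw [← h]; right; rfl
            rcases this with h' | h'
            · left; exact h'
            · right; right; exact h'
      have hBQeq : ({vh, vm, vp} : Set ℕ) = B :=
        S.qpart_eq hQ2 (by right; rfl) hBQp hvB.2 hxB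
      exact hvI ⟨B, hBR, hBQeq ▸ hvB.1⟩
    · have hpQp : ({v, x} : Set ℕ) ∈ QPart Q vh vm vp := Or.inl ⟨hr, hB0⟩
      have : ({v, x} : Set ℕ) = B := S.qpart_eq hQ2 hpQp hBQp (by right; rfl) hxB
      exact hvI ⟨B, hBR, this ▸ (by left; rfl : v ∈ ({v, x} : Set ℕ))⟩
  constructor
  · exact hsub
  · intro v hvn hvI
    rcases hInt.1.2 v ⟨hvn, hvI⟩ with h | h
    · left
      intro x hxI
      left
      exact ⟨h x hxI, hno v hvI x hxI⟩
    · right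
      intro x hxI
      left
      exact ⟨h x hxI, fun hc => hno v hvI x hxI (S.symm hc)⟩

/-- helper : a 2-element subset of Iio n is a nontrivial subset (n ≥ 5). -/
lemma pair_nontrivial (hn : 5 ≤ n) {c d : ℕ} (hcd : c ≠ d) (hc : c < n) (hd : d < n) :
    ¬ IsTrivialSubset (Set.Iio n) ({c, d} : Set ℕ) := by
  rintro (h | ⟨e, h⟩ | h)
  · have : c ∈ ({c, d} : Set ℕ) := by left; rfl
    rw [h] at this; exact this
  · have h1 : c ∈ ({c, d} : Set ℕ) := by left; rfl
    have h2 : d ∈ ({c, d} : Set ℕ) := by right; rfl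
    rw [h] at h1 h2
    simp only [Set.mem_singleton_iff] at h1 h2
    exact hcd (h1.trans h2.symm)
  · have h0 : ∀ z, z < n → z = c ∨ z = d := by
      intro z hz
      have : z ∈ ({c, d} : Set ℕ) := by rw [h]; exact hz
      rcases this with h' | h'
      · exact Or.inl h'
      · exact Or.inr h'
    rcases h0 0 (by omega) with e0 | e0 <;> rcases h0 1 (by omega) with e1 | e1 <;>
      rcases h0 2 (by omega) with e2 | e2 <;> omega

/-- module {vm, vp} when vp = vm + 1. -/
lemma module_c2 (S : Setup n Q vh vm vp) (h21 : vp = vm + 1) :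
    IsModuleOn Q (Set.Iio n) ({vm, vp} : Set ℕ) := by
  have hvm := S.vm_lt
  have hvp := S.vp_lt
  have hhm := S.vh_ne_vm
  have hhp := S.vh_ne_vp
  constructor
  · rintro x (h | h)
    · exact h ▸ hvm
    · simp only [Set.mem_singleton_iff] at h; exact h ▸ hvp
  · intro v hvn hvM
    have hvne : v ≠ vm ∧ v ≠ vp := by
      constructor <;> intro h <;> apply hvM
      · left; exact h
      · right; exact h
    by_cases hvvh : v = vh
    · subst hvvh
      rcases Nat.lt_or_ge v vm with h | h
      · right
        rintro x (rfl | hx)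
        · exact Or.inr ⟨h, S.symm S.rhm⟩
        · simp only [Set.mem_singleton_iff] at hx
          subst hx
          exact Or.inr ⟨by omega, S.symm S.rhp⟩
      · have hvgt : vp < v := by omega
        left
        rintro x (rfl | hx)
        · exact Or.inr ⟨by omega, S.rhm⟩
        · simp only [Set.mem_singleton_iff] at hx
          subst hx
          exact Or.inr ⟨hvgt, S.rhp⟩
    · have hnm : ¬ Rel Q v vm := by
        intro h
        exact hvvh (S.partner_unique (fun hh => hhm hh.symm) (S.symm h) (S.symm S.rhm))
      have hnp : ¬ Rel Q v vp := by
        intro h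
        exact hvvh (S.partner_unique (fun hh => hhp hh.symm) (S.symm h) (S.symm S.rhp))
      rcases Nat.lt_or_ge v vm with h | h
      · left
        rintro x (rfl | hx)
        · exact Or.inl ⟨h, hnm⟩
        · simp only [Set.mem_singleton_iff] at hx
          subst hx
          exact Or.inl ⟨by omega, hnp⟩
      · have hvgt : vp < v := by omega
        right
        rintro x (rfl | hx)
        · exact Or.inl ⟨by omega, fun hc => hnm (S.symm hc)⟩
        · simp only [Set.mem_singleton_iff] at hx
          subst hx
          exact Or.inl ⟨hvgt, fun hc => hnp (S.symm hc)⟩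

/-- module {v, v+3} for condition 3. -/
lemma module_c3 (S : Setup n Q vh vm vp) {v : ℕ} (h1 : Rel Q v (v+2)) (h2 : Rel Q (v+1) (v+3))
    (hv : vh ≠ v) (hv3 : vh ≠ v + 3) :
    IsModuleOn Q (Set.Iio n) ({v, v + 3} : Set ℕ) := by
  have hlt := S.mem_lt h2
  have hlt1 := S.mem_lt h1
  constructor
  · rintro x (h | h)
    · simp only [Set.mem_Iio]; omega
    · simp only [Set.mem_singleton_iff] at h; subst h; exact hlt.2.1
  · intro w hwn hwM
    have hwne : w ≠ v ∧ w ≠ v + 3 := by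
      constructor <;> intro h <;> apply hwM
      · left; exact h
      · right; exact h
    have hrv : ∀ {u : ℕ}, Rel Q v u → u = v + 2 :=
      fun h => S.partner_unique (fun hh => hv hh.symm) h h1
    have hrv3 : ∀ {u : ℕ}, Rel Q (v+3) u → u = v + 1 :=
      fun h => S.partner_unique (fun hh => hv3 hh.symm) h (S.symm h2)
    by_cases hw1 : w = v + 1
    · subst hw1
      right
      rintro x (rfl | hx)
      · exact Or.inl ⟨by omega, fun hc => by have := hrv hc; omega⟩
      · simp only [Set.mem_singleton_iff] at hx
        subst hx
        exact Or.inr ⟨by omega, by rw [Set.pair_comm]; exact h2⟩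
    by_cases hw2 : w = v + 2
    · subst hw2
      left
      rintro x (rfl | hx)
      · exact Or.inr ⟨by omega, by rw [Set.pair_comm]; exact h1⟩
      · simp only [Set.mem_singleton_iff] at hx
        subst hx
        refine Or.inl ⟨by omega, fun hc => ?_⟩
        have := hrv3 (S.symm hc)
        omega
    · have hnv : ¬ Rel Q w v := fun hc => hw2 (hrv (S.symm hc))
      have hnv3 : ¬ Rel Q w (v+3) := fun hc => hw1 (hrv3 (S.symm hc))
      rcases Nat.lt_or_ge w v with h | h
      · left
        rintro x (rfl | hx)
        · exact Or.inl ⟨h, hnv⟩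
        · simp only [Set.mem_singleton_iff] at hx
          subst hx
          exact Or.inl ⟨by omega, hnv3⟩
      · have hwgt : v + 3 < w := by
          rcases hwne with ⟨e1, e2⟩; omega
        right
        rintro x (rfl | hx)
        · exact Or.inl ⟨by omega, fun hc => hnv (S.symm hc)⟩
        · simp only [Set.mem_singleton_iff] at hx
          subst hx
          exact Or.inl ⟨hwgt, fun hc => hnv3 (S.symm hc)⟩

/-- module {v, v+1} for condition 4 when vh ∉ {v, v+1}. -/
lemma module_c4a (S : Setup n Q vh vm vp) {v : ℕ} (h1 : Rel Q v (v+1))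
    (hv : vh ≠ v) (hv1 : vh ≠ v + 1) :
    IsModuleOn Q (Set.Iio n) ({v, v + 1} : Set ℕ) := by
  have hlt := S.mem_lt h1
  constructor
  · rintro x (h | h)
    · simp only [Set.mem_Iio]; omega
    · simp only [Set.mem_singleton_iff] at h; subst h; exact hlt.2.1
  · intro w hwn hwM
    have hwne : w ≠ v ∧ w ≠ v + 1 := by
      constructor <;> intro h <;> apply hwM
      · left; exact h
      · right; exact h
    have hnv : ¬ Rel Q w v := by
      intro hc
      have := S.partner_unique (fun hh => hv hh.symm) (S.symm hc) h1
      omega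
    have hnv1 : ¬ Rel Q w (v+1) := by
      intro hc
      have := S.partner_unique (fun hh => hv1 hh.symm) (S.symm hc) (S.symm h1)
      omega
    rcases Nat.lt_or_ge w v with h | h
    · left
      rintro x (rfl | hx)
      · exact Or.inl ⟨h, hnv⟩
      · simp only [Set.mem_singleton_iff] at hx
        subst hx
        exact Or.inl ⟨by omega, hnv1⟩
    · have hwgt : v + 1 < w := by rcases hwne with ⟨e1, e2⟩; omega
      right
      rintro x (rfl | hx)
      · exact Or.inl ⟨by omega, fun hc => hnv (S.symm hc)⟩
      · simp only [Set.mem_singleton_iff] at hx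
        subst hx
        exact Or.inl ⟨hwgt, fun hc => hnv1 (S.symm hc)⟩

/-- module Iio n \ {1} when vh = 0 and {0,1} ∈ Q. -/
lemma module_c4b (S : Setup n Q vh vm vp) (h1 : Rel Q 0 1) (hvh : vh = 0) :
    IsModuleOn Q (Set.Iio n) (Set.Iio n \ {1}) := by
  constructor
  · exact Set.diff_subset
  · intro w hwn hwM
    have hw1 : w = 1 := by
      by_contra h
      exact hwM ⟨hwn, h⟩
    subst hw1
    left
    rintro x ⟨hx1, hx2⟩
    simp only [Set.mem_singleton_iff] at hx2
    rcases Nat.eq_or_lt_of_le (Nat.zero_le x) with h0 | h0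
    · right
      refine ⟨by omega, ?_⟩
      rw [← h0, Set.pair_comm]
      exact h1
    · left
      refine ⟨by omega, fun hc => ?_⟩
      have : x = 0 := S.partner_unique (by omega) hc (S.symm h1)
      omega

/-- module Iio n \ {n-2} when vh = n-1 and {n-2,n-1} ∈ Q. -/
lemma module_c4c (S : Setup n Q vh vm vp) (h1 : Rel Q (n-2) (n-1)) (hvh : vh = n-1) :
    IsModuleOn Q (Set.Iio n) (Set.Iio n \ {n-2}) := by
  have hn := S.hn
  constructor
  · exact Set.diff_subset
  · intro w hwn hwM
    have hw1 : w = n - 2 := by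
      by_contra h
      exact hwM ⟨hwn, h⟩
    subst hw1
    right
    rintro x ⟨hx1, hx2⟩
    simp only [Set.mem_singleton_iff] at hx2
    simp only [Set.mem_Iio] at hx1
    rcases Nat.lt_or_ge x (n-2) with h0 | h0
    · left
      refine ⟨h0, fun hc => ?_⟩
      have : x = n - 1 := S.partner_unique (by omega) (S.symm hc) h1
      omega
    · have hx3 : x = n - 1 := by omega
      right
      refine ⟨by omega, ?_⟩
      rw [hx3, Set.pair_comm]
      exact h1

lemma diff_nontrivial (hn : 5 ≤ n) {c : ℕ} (hc : c < n) :
    ¬ IsTrivialSubset (Set.Iio n) (Set.Iio n \ {c}) := by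
  obtain ⟨d1, d2, h⟩ : ∃ d1 d2, d1 < n ∧ d2 < n ∧ d1 ≠ c ∧ d2 ≠ c ∧ d1 ≠ d2 := by
    by_cases h0 : c = 0
    · exact ⟨1, 2, by omega, by omega, by omega, by omega, by omega⟩
    · by_cases h1 : c = 1
      · exact ⟨0, 2, by omega, by omega, by omega, by omega, by omega⟩
      · exact ⟨0, 1, by omega, by omega, by omega, by omega, by omega⟩
  obtain ⟨h1, h2, h3, h4, h5⟩ := h
  have hd1 : d1 ∈ Set.Iio n \ {c} := ⟨h1, h3⟩
  have hd2 : d2 ∈ Set.Iio n \ {c} := ⟨h2, h4⟩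
  rintro (h | ⟨e, h⟩ | h)
  · rw [h] at hd1; exact hd1
  · rw [h] at hd1 hd2
    simp only [Set.mem_singleton_iff] at hd1 hd2
    exact h5 (hd1.trans hd2.symm)
  · have : c ∈ Set.Iio n \ {c} := by rw [h]; exact hc
    exact this.2 rfl

end Stmt5


open Stmt5 in
/-- Corollary 3. Let `n ≥ 5` be odd, `V = {0, …, n−1}`, `Q` a
quasi-pairing of `V` (so `⋃₀ Q = V`) with distinguished data `(vh, vm, vp)`, and
`T := Inv(underline(n), Q)`. Then `T` is indecomposable iff: (1) `Q` is irreducible;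
(2) `v_Q^+ ≥ v_Q^- + 2`; (3) if `{v, v+2} ∈ Q` and `{v+1, v+3} ∈ Q`, then
`v̂_Q ∈ {v, v+3}`; (4) if `{v, v+1} ∈ Q`, then `v̂_Q ∈ {v, v+1} ∖ {0, n−1}`. -/
theorem stmt_5 (n : ℕ) (hn : 5 ≤ n) (hodd : Odd n) (Q : Set (Set ℕ))
    (hQ : IsPartialQuasiPairingOn (Set.Iio n) Q) (hcover : ⋃₀ Q = Set.Iio n)
    (vh vm vp : ℕ) (hdata : QPData Q vh vm vp) :
    IndecomposableOn Q (Set.Iio n) ↔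
      (IrreducibleOn (Set.Iio n) (QPart Q vh vm vp) ∧
        vm + 2 ≤ vp ∧
        (∀ v < n, ({v, v + 2} : Set ℕ) ∈ Q → ({v + 1, v + 3} : Set ℕ) ∈ Q →
          (vh = v ∨ vh = v + 3)) ∧
        (∀ v < n, ({v, v + 1} : Set ℕ) ∈ Q →
          (vh = v ∨ vh = v + 1) ∧ vh ≠ 0 ∧ vh ≠ n - 1)) := by

  have S : Setup n Q vh vm vp := setup_of n hn Q hQ hcover vh vm vp hdata
  have hQ2 : ∀ B ∈ Q, B.ncard = 2 := fun B hB => (hQ.1 B hB).2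
  constructor
  · intro hind
    refine ⟨?_, ?_, ?_, ?_⟩
    · intro R hR hInt
      exact hInt.2 (hind _ (reducible_module S hQ2 hR hInt))
    · by_contra hc
      have h21 : vp = vm + 1 := by have := S.hmp; omega
      exact pair_nontrivial (c := vm) (d := vp) S.hn (by omega) S.vm_lt S.vp_lt (hind _ (module_c2 S h21))
    · intro v hv h1 h2
      by_contra hc
      push_neg at hc
      have hlt := S.mem_lt (show Rel Q (v+1) (v+3) from h2)
      exact pair_nontrivial (c := v) (d := v + 3) S.hn (by omega) (by omega) hlt.2.1
        (hind _ (module_c3 S h1 h2 hc.1 hc.2))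
    · intro v hv h1
      have hlt := S.mem_lt (show Rel Q v (v+1) from h1)
      have hmem : vh = v ∨ vh = v + 1 := by
        by_contra hc
        push_neg at hc
        exact pair_nontrivial (c := v) (d := v + 1) S.hn (by omega) (by omega) hlt.2.1
          (hind _ (module_c4a S h1 hc.1 hc.2))
      refine ⟨hmem, ?_, ?_⟩
      · intro h0
        have hv0 : v = 0 := by rcases hmem with h | h <;> omega
        subst hv0
        exact diff_nontrivial S.hn (by omega) (hind _ (module_c4b S h1 h0))
      · intro h0
        have hvlt := hlt.2.1
        have hv0 : v = n - 2 := by rcases hmem with h | h <;> omega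
        have hrel : Rel Q (n-2) (n-1) := by
          have e3 : n - 2 + 1 = n - 1 := by omega
          rw [hv0] at h1
          rw [e3] at h1
          exact h1
        exact diff_nontrivial S.hn (by omega) (hind _ (module_c4c S hrel h0))
  · rintro ⟨C1, C2, C3, C4⟩
    intro M hMod
    by_contra hnt
    exact no_module S C1 C2 C3 C4 hMod hnt
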